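/- arXiv:1604.05090 — 4 statements merged into one kernel-verified Lean document; each statement's English description precedes it below -/
import Mathlib

section
/- For every integer n ≥ 1, let N = 2^n and let P be the comparison matrix of the hard n-round tournament H_n. Then for every draw σ for which player 1 wins with probability 1 (i.e. wp(1,P,σ) = 1), there exists a polynomial Q with real coefficients such that for all ε ∈ (0,1), wp_ε(1,P,σ) ≤ 1 − (N−1)·ε + ε²·Q(ε). -/
/-- A perfect (balanced) binary tree of depth `n` with leaves labelled by `α`. -/
inductive BT (α : Type) : ℕ → Type
  | leaf : α → BT α 0
  | node {n : ℕ} : BT α n → BT α n → BT α (n + 1)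

namespace BT

/-- The list of leaf labels, from left to right. -/
def leaves {α : Type} : ∀ {n : ℕ}, BT α n → List α
  | _, .leaf a => [a]
  | _, .node L R => L.leaves ++ R.leaves

/-- Relabel the leaves of a tree. -/
def map {α β : Type} (f : α → β) : ∀ {n : ℕ}, BT α n → BT β n
  | _, .leaf a => .leaf (f a)
  | _, .node L R => .node (L.map f) (R.map f)

end BT

/-- Two trees represent the same draw iff one can be obtained from the other by
swapping the two children subtrees at internal nodes. -/
def BTequiv {α : Type} : ∀ {n : ℕ}, BT α n → BT α n → Prop
  | 0, .leaf a, .leaf b => a = b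
  | _ + 1, .node L R, .node L' R' =>
      (BTequiv L L' ∧ BTequiv R R') ∨ (BTequiv L R' ∧ BTequiv R L')

/-- A draw: each of the `N` players occurs exactly once among the leaves. -/
def IsDraw {N n : ℕ} (t : BT (Fin N) n) : Prop :=
  ∀ i : Fin N, t.leaves.count i = 1

/-- The winning distribution of a knockout tournament: `wd P t i` is the probability
that player `i` wins the (sub)tournament with draw `t` and comparison matrix `P`. -/
noncomputable def wd {N : ℕ} (P : Fin N → Fin N → ℝ) :
    ∀ {n : ℕ}, BT (Fin N) n → Fin N → ℝ
  | _, .leaf j => fun i => if i = j then 1 else 0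
  | _, .node L R => fun i =>
      wd P L i * (∑ j, wd P R j * P i j) + wd P R i * (∑ j, wd P L j * P i j)

/-- `P` is a comparison matrix. -/
def IsCompMatrix {N : ℕ} (P : Fin N → Fin N → ℝ) : Prop :=
  ∀ i j : Fin N, i ≠ j → 0 ≤ P i j ∧ P i j ≤ 1 ∧ P i j + P j i = 1

/-- `P` is deterministic: every off-diagonal entry is 0 or 1. -/
def IsDet {N : ℕ} (P : Fin N → Fin N → ℝ) : Prop :=
  ∀ i j : Fin N, i ≠ j → P i j = 0 ∨ P i j = 1

/-- The set `𝒫(P,ε)` of ε-perturbations of `P`. -/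
def perturbs {N : ℕ} (P : Fin N → Fin N → ℝ) (ε : ℝ) : Set (Fin N → Fin N → ℝ) :=
  {P' | IsCompMatrix P' ∧ ∀ i j : Fin N, i ≠ j → |P' i j - P i j| ≤ ε}

/-- The ε-guaranteed winning probability `wp_ε(i,P,σ)`. -/
noncomputable def wpe {N n : ℕ} (i : Fin N) (P : Fin N → Fin N → ℝ) (ε : ℝ)
    (t : BT (Fin N) n) : ℝ :=
  sInf ((fun P' => wd P' t i) '' perturbs P ε)

/-- The comparison matrix of the hard `n`-round tournament `H_n` (players 0-indexed):
for `i < j`, player `i` beats player `j` iff `i = j - 2 ^ v` where `2 ^ v` is the largest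
power of 2 dividing `j` (in 0-indexed numbering). -/
noncomputable def hardP (n : ℕ) : Fin (2 ^ n) → Fin (2 ^ n) → ℝ := fun i j =>
  if i = j then 0
  else if (i : ℕ) < (j : ℕ) then
    (if (i : ℕ) + 2 ^ padicValNat 2 (j : ℕ) = (j : ℕ) then 1 else 0)
  else
    (if (j : ℕ) + 2 ^ padicValNat 2 (i : ℕ) = (i : ℕ) then 0 else 1)

/-- The tree of depth `n` whose leaves are `s, s+1, …, s + 2^n - 1` from left to right. -/
def ordTree : (n : ℕ) → ℕ → BT ℕ n
  | 0, s => .leaf s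
  | n + 1, s => .node (ordTree n s) (ordTree n (s + 2 ^ n))

/-- The identity draw, placing players `0, 1, …, 2^n - 1` on the leaves in order. -/
def idDraw (n : ℕ) : BT (Fin (2 ^ n)) n :=
  (ordTree n 0).map (fun k => ⟨k % 2 ^ n, Nat.mod_lt _ (by positivity)⟩)

/-- `f_p(x,y) = p(x+y) + (1-2p)xy`. -/
def fp (p x y : ℝ) : ℝ := p * (x + y) + (1 - 2 * p) * x * y

/-- `B_p` on trees with real leaf labels. -/
noncomputable def Bp (p : ℝ) : ∀ {n : ℕ}, BT ℝ n → ℝ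
  | _, .leaf x => x
  | _, .node L R => fp p (Bp p L) (Bp p R)

/-- Group a list into consecutive pairs. -/
def pairList {α : Type} : List α → List (α × α)
  | a :: b :: rest => (a, b) :: pairList rest
  | _ => []

/-- The first-round matches of a draw: the consecutive sibling pairs of leaves. -/
def firstPairs {α : Type} {n : ℕ} (t : BT α n) : List (α × α) := pairList t.leaves

/-- A draw is mixed (w.r.t. the set `B` of big players) if every first-round match
pairs a big player with a small player. -/
def MixedDraw {N n : ℕ} (B : Finset (Fin N)) (t : BT (Fin N) n) : Prop :=
  ∀ q ∈ firstPairs t, ((q.1 ∈ B) ↔ q.2 ∉ B)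

/-- Number of leaves labelled `1`. -/
noncomputable def ones {n : ℕ} (t : BT ℝ n) : ℕ := t.leaves.count 1

/-- All leaf labels are `0` or `1`. -/
def ZeroOne {n : ℕ} (t : BT ℝ n) : Prop := ∀ x ∈ t.leaves, x = 0 ∨ x = 1

/-- `P[kl←t]`: the matrix agreeing with `P` except `P k l = t` and `P l k = 1 - t`. -/
def updPair {N : ℕ} (P : Fin N → Fin N → ℝ) (k l : Fin N) (t : ℝ) :
    Fin N → Fin N → ℝ :=
  fun i j => if i = k ∧ j = l then t else if i = l ∧ j = k then 1 - t else P i j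

/-- Perturb a deterministic matrix: for each pair `(w, l) ∈ S` (winner first),
set `P w l = 1 - ε` and `P l w = ε`; other entries unchanged. -/
def detPerturb {N : ℕ} (P : Fin N → Fin N → ℝ) (S : Finset (Fin N × Fin N)) (ε : ℝ) :
    Fin N → Fin N → ℝ :=
  fun i j => if (i, j) ∈ S then 1 - ε else if (j, i) ∈ S then ε else P i j

/-- Swap the result of the single match between `a` and `b`. -/
def swapPair {N : ℕ} (P : Fin N → Fin N → ℝ) (a b : Fin N) : Fin N → Fin N → ℝ :=
  fun i j => if i = a ∧ j = b then P b a else if i = b ∧ j = a then P a b else P i j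

/-- The pair `(a,b)` (with `a` the winner) is crucial for `i` in `C(P,σ)`. -/
def Crucial {N n : ℕ} (P : Fin N → Fin N → ℝ) (σ : BT (Fin N) n) (i : Fin N)
    (a b : Fin N) : Prop :=
  a ≠ b ∧ P a b = 1 ∧ wd (swapPair P a b) σ i = 0

namespace KTaux

open scoped Classical

noncomputable def champG {α : Type} (f : α → α → Prop) : ∀ {r : ℕ}, BT α r → α
  | _, .leaf a => a
  | _, .node A B => if f (champG f A) (champG f B) then champG f A else champG f B

noncomputable def matchesG {α : Type} (f : α → α → Prop) : ∀ {r : ℕ}, BT α r → List (α × α)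
  | _, .leaf _ => []
  | _, .node A B =>
      (if f (champG f A) (champG f B) then (champG f A, champG f B)
       else (champG f B, champG f A)) :: (matchesG f A ++ matchesG f B)

lemma leaves_map {α β : Type} (φ : α → β) : ∀ {r : ℕ} (t : BT α r),
    (t.map φ).leaves = t.leaves.map φ
  | _, .leaf a => rfl
  | _, .node A B => by
      simp [BT.map, BT.leaves, leaves_map φ A, leaves_map φ B]

lemma leaves_length {α : Type} : ∀ {r : ℕ} (t : BT α r), t.leaves.length = 2 ^ r
  | _, .leaf a => rfl
  | _, .node A B => by
      simp [BT.leaves, leaves_length A, leaves_length B, pow_succ]; ring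

lemma champG_mem {α : Type} (f : α → α → Prop) : ∀ {r : ℕ} (t : BT α r),
    champG f t ∈ t.leaves
  | _, .leaf a => by simp [champG, BT.leaves]
  | _, .node A B => by
      simp only [champG, BT.leaves, List.mem_append]
      split
      · exact Or.inl (champG_mem f A)
      · exact Or.inr (champG_mem f B)

lemma nodup_node {α : Type} {r : ℕ} {A B : BT α r}
    (h : (BT.node A B).leaves.Nodup) :
    A.leaves.Nodup ∧ B.leaves.Nodup ∧ ∀ x ∈ A.leaves, x ∉ B.leaves := by
  rw [BT.leaves, List.nodup_append] at h
  exact ⟨h.1, h.2.1, fun x hx hx' => h.2.2 x hx x hx' rfl⟩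

lemma champG_congr {α : Type} {f g : α → α → Prop} : ∀ {r : ℕ} (t : BT α r),
    (∀ x ∈ t.leaves, ∀ y ∈ t.leaves, x ≠ y → (f x y ↔ g x y)) → t.leaves.Nodup →
    champG f t = champG g t
  | _, .leaf a, _, _ => rfl
  | _, .node A B, h, hnd => by
      obtain ⟨hA, hB, hAB⟩ := nodup_node hnd
      have hsubA : ∀ x ∈ A.leaves, x ∈ (BT.node A B).leaves := by
        intro x hx; rw [BT.leaves, List.mem_append]; exact Or.inl hx
      have hsubB : ∀ x ∈ B.leaves, x ∈ (BT.node A B).leaves := by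
        intro x hx; rw [BT.leaves, List.mem_append]; exact Or.inr hx
      have e1 : champG f A = champG g A :=
        champG_congr A (fun x hx y hy => h x (hsubA x hx) y (hsubA y hy)) hA
      have e2 : champG f B = champG g B :=
        champG_congr B (fun x hx y hy => h x (hsubB x hx) y (hsubB y hy)) hB
      have hne : champG f A ≠ champG f B := by
        intro he
        exact hAB _ (champG_mem f A) (he ▸ champG_mem f B)
      have := h _ (hsubA _ (champG_mem f A)) _ (hsubB _ (champG_mem f B)) hne
      simp only [champG, e1, e2]
      rw [e1, e2] at this
      by_cases hc : g (champG g A) (champG g B)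
      · rw [if_pos (this.2 hc), if_pos hc]
      · rw [if_neg (fun hh => hc (this.1 hh)), if_neg hc]

lemma champG_map {α β : Type} (φ : α → β) {f : α → α → Prop} {g : β → β → Prop} :
    ∀ {r : ℕ} (t : BT α r),
    (∀ x ∈ t.leaves, ∀ y ∈ t.leaves, x ≠ y → (f x y ↔ g (φ x) (φ y))) → t.leaves.Nodup →
    champG g (t.map φ) = φ (champG f t)
  | _, .leaf a, _, _ => rfl
  | _, .node A B, h, hnd => by
      obtain ⟨hA, hB, hAB⟩ := nodup_node hnd
      have hsubA : ∀ x ∈ A.leaves, x ∈ (BT.node A B).leaves := by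
        intro x hx; rw [BT.leaves, List.mem_append]; exact Or.inl hx
      have hsubB : ∀ x ∈ B.leaves, x ∈ (BT.node A B).leaves := by
        intro x hx; rw [BT.leaves, List.mem_append]; exact Or.inr hx
      have e1 : champG g (A.map φ) = φ (champG f A) :=
        champG_map φ A (fun x hx y hy => h x (hsubA x hx) y (hsubA y hy)) hA
      have e2 : champG g (B.map φ) = φ (champG f B) :=
        champG_map φ B (fun x hx y hy => h x (hsubB x hx) y (hsubB y hy)) hB
      have hne : champG f A ≠ champG f B := by
        intro he; exact hAB _ (champG_mem f A) (he ▸ champG_mem f B)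
      have hiff := h _ (hsubA _ (champG_mem f A)) _ (hsubB _ (champG_mem f B)) hne
      simp only [BT.map, champG, e1, e2]
      by_cases hc : f (champG f A) (champG f B)
      · rw [if_pos (hiff.1 hc), if_pos hc]
      · rw [if_neg (fun hh => hc (hiff.2 hh)), if_neg hc]

lemma matchesG_map {α β : Type} (φ : α → β) {f : α → α → Prop} {g : β → β → Prop} :
    ∀ {r : ℕ} (t : BT α r),
    (∀ x ∈ t.leaves, ∀ y ∈ t.leaves, x ≠ y → (f x y ↔ g (φ x) (φ y))) → t.leaves.Nodup →
    matchesG g (t.map φ) = (matchesG f t).map (Prod.map φ φ)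
  | _, .leaf a, _, _ => rfl
  | _, .node A B, h, hnd => by
      obtain ⟨hA, hB, hAB⟩ := nodup_node hnd
      have hsubA : ∀ x ∈ A.leaves, x ∈ (BT.node A B).leaves := by
        intro x hx; rw [BT.leaves, List.mem_append]; exact Or.inl hx
      have hsubB : ∀ x ∈ B.leaves, x ∈ (BT.node A B).leaves := by
        intro x hx; rw [BT.leaves, List.mem_append]; exact Or.inr hx
      have e1 : champG g (A.map φ) = φ (champG f A) :=
        champG_map φ A (fun x hx y hy => h x (hsubA x hx) y (hsubA y hy)) hA
      have e2 : champG g (B.map φ) = φ (champG f B) :=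
        champG_map φ B (fun x hx y hy => h x (hsubB x hx) y (hsubB y hy)) hB
      have m1 := matchesG_map φ A (fun x hx y hy => h x (hsubA x hx) y (hsubA y hy)) hA
      have m2 := matchesG_map φ B (fun x hx y hy => h x (hsubB x hx) y (hsubB y hy)) hB
      have hne : champG f A ≠ champG f B := by
        intro he; exact hAB _ (champG_mem f A) (he ▸ champG_mem f B)
      have hiff := h _ (hsubA _ (champG_mem f A)) _ (hsubB _ (champG_mem f B)) hne
      simp only [BT.map, matchesG, e1, e2, m1, m2, List.map_cons, List.map_append]
      by_cases hc : f (champG f A) (champG f B)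
      · rw [if_pos (hiff.1 hc), if_pos hc]; rfl
      · rw [if_neg (fun hh => hc (hiff.2 hh)), if_neg hc]; rfl

end KTaux

namespace KTaux

open scoped Classical

def Asymm {α : Type} (f : α → α → Prop) : Prop := ∀ x y : α, x ≠ y → (f x y ↔ ¬ f y x)

def swapRel {α : Type} (f : α → α → Prop) (a b : α) : α → α → Prop :=
  fun x y => if x = a ∧ y = b then f b a else if x = b ∧ y = a then f a b else f x y

lemma swapRel_asymm {α : Type} {f : α → α → Prop} (hf : Asymm f) {a b : α} (hab : a ≠ b) :
    Asymm (swapRel f a b) := by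
  intro x y hxy
  unfold swapRel
  by_cases h1 : x = a ∧ y = b
  · obtain ⟨rfl, rfl⟩ := h1
    rw [if_pos (⟨rfl, rfl⟩ : x = x ∧ y = y), if_neg (fun h : y = x ∧ x = y => hxy h.2),
        if_pos (⟨rfl, rfl⟩ : y = y ∧ x = x)]
    exact hf y x hxy.symm
  · by_cases h2 : x = b ∧ y = a
    · obtain ⟨rfl, rfl⟩ := h2
      rw [if_neg (fun h : x = y ∧ y = x => hxy h.1), if_pos (⟨rfl, rfl⟩ : x = x ∧ y = y),
          if_pos (⟨rfl, rfl⟩ : y = y ∧ x = x)]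
      exact hf y x hxy.symm
    · rw [if_neg h1, if_neg h2, if_neg (fun h : y = a ∧ x = b => h2 ⟨h.2, h.1⟩),
          if_neg (fun h : y = b ∧ x = a => h1 ⟨h.2, h.1⟩)]
      exact hf x y hxy

lemma matchesG_mem_leaves {α : Type} {f : α → α → Prop} : ∀ {r : ℕ} (t : BT α r)
    (p : α × α), p ∈ matchesG f t → p.1 ∈ t.leaves ∧ p.2 ∈ t.leaves
  | _, .leaf a, p, hp => by simp [matchesG] at hp
  | _, .node A B, p, hp => by
      have hsubA : ∀ x ∈ A.leaves, x ∈ (BT.node A B).leaves := by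
        intro x hx; rw [BT.leaves, List.mem_append]; exact Or.inl hx
      have hsubB : ∀ x ∈ B.leaves, x ∈ (BT.node A B).leaves := by
        intro x hx; rw [BT.leaves, List.mem_append]; exact Or.inr hx
      rw [matchesG, List.mem_cons, List.mem_append] at hp
      rcases hp with hp | hp | hp
      · subst hp
        by_cases hc : f (champG f A) (champG f B)
        · rw [if_pos hc]
          exact ⟨hsubA _ (champG_mem f A), hsubB _ (champG_mem f B)⟩
        · rw [if_neg hc]
          exact ⟨hsubB _ (champG_mem f B), hsubA _ (champG_mem f A)⟩
      · have := matchesG_mem_leaves A p hp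
        exact ⟨hsubA _ this.1, hsubA _ this.2⟩
      · have := matchesG_mem_leaves B p hp
        exact ⟨hsubB _ this.1, hsubB _ this.2⟩

end KTaux

namespace KTaux

open scoped Classical

lemma matchesG_ne {α : Type} {f : α → α → Prop} : ∀ {r : ℕ} (t : BT α r),
    t.leaves.Nodup → ∀ p ∈ matchesG f t, p.1 ≠ p.2
  | _, .leaf a, _, p, hp => by simp [matchesG] at hp
  | _, .node A B, hnd, p, hp => by
      obtain ⟨hA, hB, hAB⟩ := nodup_node hnd
      rw [matchesG, List.mem_cons, List.mem_append] at hp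
      rcases hp with hp | hp | hp
      · subst hp
        have hne : champG f A ≠ champG f B := by
          intro he; exact hAB _ (champG_mem f A) (he ▸ champG_mem f B)
        by_cases hc : f (champG f A) (champG f B)
        · rw [if_pos hc]; exact hne
        · rw [if_neg hc]; exact hne.symm
      · exact matchesG_ne A hA p hp
      · exact matchesG_ne B hB p hp

lemma matchesG_winner {α : Type} {f : α → α → Prop} (hf : Asymm f) : ∀ {r : ℕ}
    (t : BT α r), t.leaves.Nodup → ∀ p ∈ matchesG f t, f p.1 p.2
  | _, .leaf a, _, p, hp => by simp [matchesG] at hp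
  | _, .node A B, hnd, p, hp => by
      obtain ⟨hA, hB, hAB⟩ := nodup_node hnd
      rw [matchesG, List.mem_cons, List.mem_append] at hp
      rcases hp with hp | hp | hp
      · subst hp
        have hne : champG f A ≠ champG f B := by
          intro he; exact hAB _ (champG_mem f A) (he ▸ champG_mem f B)
        by_cases hc : f (champG f A) (champG f B)
        · rw [if_pos hc]; exact hc
        · rw [if_neg hc]
          exact (hf _ _ hne.symm).mpr hc
      · exact matchesG_winner hf A hA p hp
      · exact matchesG_winner hf B hB p hp

lemma matchesG_length {α : Type} (f : α → α → Prop) : ∀ {r : ℕ} (t : BT α r),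
    (matchesG f t).length = 2 ^ r - 1
  | _, .leaf a => rfl
  | _, .node A B => by
      rw [matchesG, List.length_cons, List.length_append, matchesG_length f A,
        matchesG_length f B]
      have : 1 ≤ 2 ^ ‹ℕ› := Nat.one_le_two_pow
      omega

lemma losers_subset {α : Type} {f : α → α → Prop} {r : ℕ} (t : BT α r)
    (x : α) (hx : x ∈ (matchesG f t).map Prod.snd) : x ∈ t.leaves := by
  rw [List.mem_map] at hx
  obtain ⟨p, hp, rfl⟩ := hx
  exact (matchesG_mem_leaves t p hp).2

lemma champ_not_loser {α : Type} {f : α → α → Prop} : ∀ {r : ℕ} (t : BT α r),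
    t.leaves.Nodup → champG f t ∉ (matchesG f t).map Prod.snd
  | _, .leaf a, _ => by simp [matchesG]
  | _, .node A B, hnd => by
      obtain ⟨hA, hB, hAB⟩ := nodup_node hnd
      have hne : champG f A ≠ champG f B := by
        intro he; exact hAB _ (champG_mem f A) (he ▸ champG_mem f B)
      intro hmem
      rw [matchesG, List.map_cons, List.mem_cons, List.map_append, List.mem_append] at hmem
      by_cases hc : f (champG f A) (champG f B)
      · rw [champG, if_pos hc] at hmem
        rcases hmem with h | h | h
        · rw [if_pos hc] at h; exact hne h
        · exact champ_not_loser A hA h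
        · exact hAB _ (champG_mem f A) (losers_subset B _ h)
      · rw [champG, if_neg hc] at hmem
        rcases hmem with h | h | h
        · rw [if_neg hc] at h; exact hne h.symm
        · exact hAB _ (losers_subset A _ h) (champG_mem f B)
        · exact champ_not_loser B hB h

lemma losers_nodup {α : Type} {f : α → α → Prop} : ∀ {r : ℕ} (t : BT α r),
    t.leaves.Nodup → ((matchesG f t).map Prod.snd).Nodup
  | _, .leaf a, _ => by simp [matchesG]
  | _, .node A B, hnd => by
      obtain ⟨hA, hB, hAB⟩ := nodup_node hnd
      rw [matchesG, List.map_cons, List.nodup_cons, List.map_append, List.nodup_append]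
      refine ⟨?_, losers_nodup A hA, losers_nodup B hB, ?_⟩
      · intro hmem
        rw [List.mem_append] at hmem
        by_cases hc : f (champG f A) (champG f B)
        · rw [if_pos hc] at hmem
          rcases hmem with h | h
          · exact hAB _ (losers_subset A _ h) (champG_mem f B)
          · exact champ_not_loser B hB h
        · rw [if_neg hc] at hmem
          rcases hmem with h | h
          · exact champ_not_loser A hA h
          · exact hAB _ (champG_mem f A) (losers_subset B _ h)
      · intro x hx y hy hxy
        subst hxy
        exact hAB _ (losers_subset A _ hx) (losers_subset B _ hy)

lemma matchesG_nodup {α : Type} {f : α → α → Prop} {r : ℕ} (t : BT α r)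
    (hnd : t.leaves.Nodup) : (matchesG f t).Nodup :=
  (losers_nodup t hnd).of_map

lemma champ_node_comm {α : Type} {f : α → α → Prop} (hf : Asymm f) {r : ℕ}
    {A B : BT α r} (hne : champG f A ≠ champG f B) :
    champG f (BT.node A B) = champG f (BT.node B A) := by
  rw [champG, champG]
  by_cases hc : f (champG f A) (champG f B)
  · rw [if_pos hc, if_neg ((hf _ _ hne).mp hc)]
  · rw [if_neg hc, if_pos ((hf _ _ hne.symm).mpr hc)]

lemma matches_node_comm {α : Type} {f : α → α → Prop} (hf : Asymm f) {r : ℕ}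
    {A B : BT α r} (hne : champG f A ≠ champG f B) (p : α × α) :
    p ∈ matchesG f (BT.node A B) ↔ p ∈ matchesG f (BT.node B A) := by
  rw [matchesG, matchesG, List.mem_cons, List.mem_cons, List.mem_append, List.mem_append]
  have hhead : (if f (champG f A) (champG f B) then (champG f A, champG f B)
      else (champG f B, champG f A)) =
      (if f (champG f B) (champG f A) then (champG f B, champG f A)
      else (champG f A, champG f B)) := by
    by_cases hc : f (champG f A) (champG f B)
    · rw [if_pos hc, if_neg ((hf _ _ hne).mp hc)]
    · rw [if_neg hc, if_pos ((hf _ _ hne.symm).mpr hc)]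
  rw [hhead]
  tauto

end KTaux

namespace KTaux

def beatsN : ℕ → ℕ → Prop := fun i j =>
  if i < j then i + 2 ^ padicValNat 2 j = j else ¬(j + 2 ^ padicValNat 2 i = i)

lemma beatsN_refl (x : ℕ) : beatsN x x := by
  unfold beatsN
  rw [if_neg (lt_irrefl x)]
  have : 0 < 2 ^ padicValNat 2 x := Nat.pow_pos (by norm_num)
  omega

lemma beatsN_asymm : Asymm beatsN := by
  intro x y hxy
  unfold beatsN
  rcases lt_or_gt_of_ne hxy with h | h
  · rw [if_pos h, if_neg (not_lt.mpr h.le), not_not]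
  · rw [if_neg (not_lt.mpr h.le), if_pos h]

lemma two_pow_dvd_iff {y k : ℕ} (hy : y ≠ 0) : 2 ^ k ∣ y ↔ k ≤ padicValNat 2 y := by
  rw [← Nat.factorization_def y Nat.prime_two]
  exact Nat.Prime.pow_dvd_iff_le_factorization Nat.prime_two hy

lemma two_pow_v2_dvd (y : ℕ) : 2 ^ padicValNat 2 y ∣ y := pow_padicValNat_dvd

lemma v2_lt {y m : ℕ} (h0 : 0 < y) (h : y < 2 ^ m) : padicValNat 2 y < m := by
  have h1 : 2 ^ padicValNat 2 y ≤ y := Nat.le_of_dvd h0 (two_pow_v2_dvd y)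
  have : 2 ^ padicValNat 2 y < 2 ^ m := lt_of_le_of_lt h1 h
  exact (Nat.pow_lt_pow_iff_right (by norm_num)).mp this

lemma padic_shift {y m : ℕ} (h0 : 0 < y) (h : y < 2 ^ m) :
    padicValNat 2 (2 ^ m + y) = padicValNat 2 y := by
  have hne : 2 ^ m + y ≠ 0 := by positivity
  have hvm : padicValNat 2 y < m := v2_lt h0 h
  apply le_antisymm
  · -- v2 (2^m + y) ≤ v2 y
    set w := padicValNat 2 (2 ^ m + y) with hw
    have hdvd : 2 ^ w ∣ 2 ^ m + y := two_pow_v2_dvd _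
    have hwm : w ≤ m := by
      by_contra hc
      push_neg at hc
      have : 2 ^ (m + 1) ∣ 2 ^ m + y := dvd_trans (pow_dvd_pow 2 hc) hdvd
      have h2 : 2 ^ (m + 1) ≤ 2 ^ m + y := Nat.le_of_dvd (by positivity) this
      have : 2 ^ (m + 1) = 2 ^ m + 2 ^ m := by ring
      omega
    have hdy : 2 ^ w ∣ y := (Nat.dvd_add_right (pow_dvd_pow 2 hwm)).mp hdvd
    exact (two_pow_dvd_iff h0.ne').mp hdy
  · -- v2 y ≤ v2 (2^m + y)
    apply (two_pow_dvd_iff hne).mp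
    exact dvd_add (pow_dvd_pow 2 hvm.le) (two_pow_v2_dvd y)

lemma v2_pow (m : ℕ) : padicValNat 2 (2 ^ m) = m := padicValNat.prime_pow m

lemma power_between {m v : ℕ} (h1 : 2 ^ m ≤ 2 ^ v) (h2 : 2 ^ v < 2 ^ (m + 1)) :
    (2 : ℕ) ^ v = 2 ^ m := by
  have a1 : m ≤ v := (Nat.pow_le_pow_iff_right (by norm_num)).mp h1
  have a2 : v < m + 1 := (Nat.pow_lt_pow_iff_right (by norm_num)).mp h2
  have : v = m := by omega
  rw [this]

lemma not_power_between {m b : ℕ} (h1 : 2 ^ m < b) (h2 : b < 2 ^ (m + 1)) :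
    b ≠ 2 ^ padicValNat 2 b := by
  intro he
  have := power_between (le_of_lt (he ▸ h1)) (he ▸ h2)
  omega

lemma beats0 {b : ℕ} (h0 : 0 < b) : beatsN 0 b ↔ b = 2 ^ padicValNat 2 b := by
  unfold beatsN
  rw [if_pos h0, zero_add]
  exact eq_comm

lemma not_beats_pow_zero (m : ℕ) : ¬ beatsN (2 ^ m) 0 := by
  unfold beatsN
  rw [if_neg (Nat.not_lt_zero _), zero_add, v2_pow]
  simp

lemma shift_beats {m x y : ℕ} (hx : x < 2 ^ m) (hy : y < 2 ^ m) :
    beatsN (2 ^ m + x) (2 ^ m + y) ↔ beatsN x y := by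
  rcases lt_trichotomy x y with h | rfl | h
  · have hy0 : 0 < y := by omega
    unfold beatsN
    rw [if_pos h, if_pos (by omega : 2 ^ m + x < 2 ^ m + y), padic_shift hy0 hy]
    set t := 2 ^ padicValNat 2 y
    omega
  · exact iff_of_true (beatsN_refl _) (beatsN_refl _)
  · have hx0 : 0 < x := by omega
    unfold beatsN
    rw [if_neg (by omega : ¬ x < y), if_neg (by omega : ¬ 2 ^ m + x < 2 ^ m + y),
      padic_shift hx0 hx]
    set t := 2 ^ padicValNat 2 x
    exact not_congr (by omega)

lemma high_beats_low {m b l : ℕ} (hb1 : 2 ^ m ≤ b) (hb2 : b < 2 ^ (m + 1))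
    (hl1 : 0 < l) (hl2 : l < 2 ^ m) : beatsN b l := by
  unfold beatsN
  rw [if_neg (by omega : ¬ b < l)]
  rcases eq_or_lt_of_le hb1 with he | hlt
  · rw [← he, v2_pow]
    omega
  · have hs : b = 2 ^ m + (b - 2 ^ m) := by omega
    have hs1 : 0 < b - 2 ^ m := by omega
    have hs2 : b - 2 ^ m < 2 ^ m := by
      have : 2 ^ (m + 1) = 2 ^ m + 2 ^ m := by ring
      omega
    rw [hs, padic_shift hs1 hs2]
    have hd : 2 ^ padicValNat 2 (b - 2 ^ m) ≤ b - 2 ^ m :=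
      Nat.le_of_dvd hs1 (two_pow_v2_dvd _)
    set t := 2 ^ padicValNat 2 (b - 2 ^ m)
    omega

end KTaux

namespace KTaux

open scoped Classical

lemma swapRel_iff {α : Type} (f : α → α → Prop) {a b x y : α}
    (h1 : ¬(x = a ∧ y = b)) (h2 : ¬(x = b ∧ y = a)) : swapRel f a b x y ↔ f x y := by
  unfold swapRel
  rw [if_neg h1, if_neg h2]

lemma swapRel_ab {α : Type} (f : α → α → Prop) (a b : α) : swapRel f a b a b ↔ f b a := by
  unfold swapRel
  rw [if_pos ⟨rfl, rfl⟩]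

lemma high_champ {m : ℕ} : ∀ {r : ℕ} (T : BT ℕ r), (∀ x ∈ T.leaves, x < 2 ^ (m + 1)) →
    (0 : ℕ) ∉ T.leaves → (∃ x ∈ T.leaves, 2 ^ m ≤ x) → 2 ^ m ≤ champG beatsN T
  | _, .leaf a, _, _, hex => by
      obtain ⟨x, hx, hxx⟩ := hex
      have : x = a := by simpa [BT.leaves] using hx
      subst this
      simpa [champG] using hxx
  | _, .node A B, hb, h0, hex => by
      have hsubA : ∀ x ∈ A.leaves, x ∈ (BT.node A B).leaves := by
        intro x hx; rw [BT.leaves, List.mem_append]; exact Or.inl hx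
      have hsubB : ∀ x ∈ B.leaves, x ∈ (BT.node A B).leaves := by
        intro x hx; rw [BT.leaves, List.mem_append]; exact Or.inr hx
      have h0A : (0 : ℕ) ∉ A.leaves := fun h => h0 (hsubA _ h)
      have h0B : (0 : ℕ) ∉ B.leaves := fun h => h0 (hsubB _ h)
      set cA := champG beatsN A with hcA
      set cB := champG beatsN B with hcB
      have hcAmem := champG_mem beatsN A
      have hcBmem := champG_mem beatsN B
      have hcA0 : 0 < cA := Nat.pos_of_ne_zero (fun h => h0A (h ▸ hcAmem))
      have hcB0 : 0 < cB := Nat.pos_of_ne_zero (fun h => h0B (h ▸ hcBmem))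
      have hcAb : cA < 2 ^ (m + 1) := hb _ (hsubA _ hcAmem)
      have hcBb : cB < 2 ^ (m + 1) := hb _ (hsubB _ hcBmem)
      obtain ⟨x, hx, hxx⟩ := hex
      rw [BT.leaves, List.mem_append] at hx
      rw [champG, ← hcA, ← hcB]
      rcases hx with hx | hx
      · have hA : 2 ^ m ≤ cA :=
          high_champ A (fun y hy => hb y (hsubA y hy)) h0A ⟨x, hx, hxx⟩
        by_cases hc : beatsN cA cB
        · rw [if_pos hc]; exact hA
        · rw [if_neg hc]
          by_contra hcon
          push_neg at hcon
          exact hc (high_beats_low hA hcAb hcB0 hcon)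
      · have hB : 2 ^ m ≤ cB :=
          high_champ B (fun y hy => hb y (hsubB y hy)) h0B ⟨x, hx, hxx⟩
        by_cases hc : beatsN cA cB
        · rw [if_pos hc]
          by_contra hcon
          push_neg at hcon
          have hne : cB ≠ cA := by omega
          have := high_beats_low hB hcBb hcA0 hcon
          exact ((beatsN_asymm cB cA hne).mp this) hc
        · rw [if_neg hc]; exact hB

lemma zero_champ_high_mem {m : ℕ} : ∀ {r : ℕ} (T : BT ℕ r), T.leaves.Nodup →
    (∀ x ∈ T.leaves, x < 2 ^ (m + 1)) → champG beatsN T = 0 →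
    (∃ x ∈ T.leaves, 2 ^ m ≤ x) → (2 : ℕ) ^ m ∈ T.leaves
  | _, .leaf a, _, _, hch, hex => by
      obtain ⟨x, hx, hxx⟩ := hex
      have hxa : x = a := by simpa [BT.leaves] using hx
      have : a = 0 := hch
      subst hxa; subst this
      have : (0:ℕ) < 2 ^ m := by positivity
      omega
  | _, .node A B, hnd, hb, hch, hex => by
      obtain ⟨hA, hB, hAB⟩ := nodup_node hnd
      have hsubA : ∀ x ∈ A.leaves, x ∈ (BT.node A B).leaves := by
        intro x hx; rw [BT.leaves, List.mem_append]; exact Or.inl hx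
      have hsubB : ∀ x ∈ B.leaves, x ∈ (BT.node A B).leaves := by
        intro x hx; rw [BT.leaves, List.mem_append]; exact Or.inr hx
      set cA := champG beatsN A with hcA
      set cB := champG beatsN B with hcB
      have hcAmem := champG_mem beatsN A
      have hcBmem := champG_mem beatsN B
      rw [champG, ← hcA, ← hcB] at hch
      by_cases hc : beatsN cA cB
      · rw [if_pos hc] at hch
        -- cA = 0
        have h0B : (0:ℕ) ∉ B.leaves := fun h => hAB 0 (hch ▸ hcAmem) h
        obtain ⟨x, hx, hxx⟩ := hex
        rw [BT.leaves, List.mem_append] at hx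
        rcases hx with hx | hx
        · exact hsubA _ (zero_champ_high_mem A hA (fun y hy => hb y (hsubA y hy)) hch
            ⟨x, hx, hxx⟩)
        · have hBhigh : 2 ^ m ≤ cB :=
            high_champ B (fun y hy => hb y (hsubB y hy)) h0B ⟨x, hx, hxx⟩
          have hcB0 : 0 < cB := Nat.pos_of_ne_zero (fun h => h0B (h ▸ hcBmem))
          have hbeats : beatsN 0 cB := hch ▸ hc
          have hpow := (beats0 hcB0).mp hbeats
          have := power_between (m := m) (hpow ▸ hBhigh) (hpow ▸ hb _ (hsubB _ hcBmem))
          have : cB = 2 ^ m := by omega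
          exact hsubB _ (this ▸ hcBmem)
      · rw [if_neg hc] at hch
        -- cB = 0
        have h0A : (0:ℕ) ∉ A.leaves := fun h => hAB 0 h (hch ▸ hcBmem)
        obtain ⟨x, hx, hxx⟩ := hex
        rw [BT.leaves, List.mem_append] at hx
        rcases hx with hx | hx
        · have hAhigh : 2 ^ m ≤ cA :=
            high_champ A (fun y hy => hb y (hsubA y hy)) h0A ⟨x, hx, hxx⟩
          have hcA0 : 0 < cA := Nat.pos_of_ne_zero (fun h => h0A (h ▸ hcAmem))
          have hne : cA ≠ cB := fun h => h0A (by rw [← hch, ← h]; exact hcAmem)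
          have hbeats : beatsN 0 cA := by
            have h2 : beatsN cB cA := (beatsN_asymm cB cA hne.symm).mpr hc
            rw [hch] at h2
            exact h2
          have hpow := (beats0 hcA0).mp hbeats
          have := power_between (m := m) (hpow ▸ hAhigh) (hpow ▸ hb _ (hsubA _ hcAmem))
          have : cA = 2 ^ m := by omega
          exact hsubA _ (this ▸ hcAmem)
        · exact hsubB _ (zero_champ_high_mem B hB (fun y hy => hb y (hsubB y hy)) hch
            ⟨x, hx, hxx⟩)

lemma list_full {l : List ℕ} (hnd : l.Nodup) (hb : ∀ y ∈ l, y < l.length) :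
    ∀ x, x < l.length → x ∈ l := by
  have hsub : l.toFinset ⊆ Finset.range l.length := by
    intro y hy
    exact Finset.mem_range.mpr (hb y (List.mem_toFinset.mp hy))
  have hcard : (Finset.range l.length).card ≤ l.toFinset.card := by
    rw [List.toFinset_card_of_nodup hnd, Finset.card_range]
  have heq := Finset.eq_of_subset_of_card_le hsub hcard
  intro x hx
  have : x ∈ l.toFinset := by rw [heq]; exact Finset.mem_range.mpr hx
  exact List.mem_toFinset.mp this

lemma too_many {l : List ℕ} (hnd : l.Nodup) (m : ℕ)
    (hsub : ∀ y, 2 ^ m ≤ y → y < 2 ^ (m + 1) → y ∈ l) {x : ℕ} (hx : x ∈ l)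
    (hxlow : x < 2 ^ m) : 2 ^ m + 1 ≤ l.length := by
  have hins : insert x (Finset.Ico (2 ^ m) (2 ^ (m + 1))) ⊆ l.toFinset := by
    intro y hy
    rw [Finset.mem_insert] at hy
    rcases hy with rfl | hy
    · exact List.mem_toFinset.mpr hx
    · rw [Finset.mem_Ico] at hy
      exact List.mem_toFinset.mpr (hsub y hy.1 hy.2)
  have hcard := Finset.card_le_card hins
  rw [Finset.card_insert_of_notMem (by rw [Finset.mem_Ico]; omega),
    Nat.card_Ico, List.toFinset_card_of_nodup hnd] at hcard
  have h2 : 2 ^ (m + 1) = 2 ^ m + 2 ^ m := by ring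
  omega

end KTaux

namespace KTaux

open scoped Classical

lemma core {n : ℕ}
    (IH : ∀ (T : BT ℕ n), T.leaves.Nodup → (∀ x ∈ T.leaves, x < 2 ^ n) →
      champG beatsN T = 0 → ∀ p ∈ matchesG beatsN T,
      champG (swapRel beatsN p.1 p.2) T ≠ 0)
    (L R : BT ℕ n) (hnd : (BT.node L R).leaves.Nodup)
    (hb : ∀ x ∈ (BT.node L R).leaves, x < 2 ^ (n + 1))
    (hc0 : champG beatsN (BT.node L R) = 0) (hcL : champG beatsN L = 0) :
    ∀ p ∈ matchesG beatsN (BT.node L R), champG (swapRel beatsN p.1 p.2) (BT.node L R) ≠ 0 := by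
  obtain ⟨hndL, hndR, hdisj⟩ := nodup_node hnd
  have hsubL : ∀ x ∈ L.leaves, x ∈ (BT.node L R).leaves := by
    intro x hx; rw [BT.leaves, List.mem_append]; exact Or.inl hx
  have hsubR : ∀ x ∈ R.leaves, x ∈ (BT.node L R).leaves := by
    intro x hx; rw [BT.leaves, List.mem_append]; exact Or.inr hx
  have h0L : (0 : ℕ) ∈ L.leaves := hcL ▸ champG_mem beatsN L
  have h0R : (0 : ℕ) ∉ R.leaves := fun h => hdisj 0 h0L h
  set b := champG beatsN R with hbdef
  have hbR : b ∈ R.leaves := champG_mem _ _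
  have hbne0 : b ≠ 0 := fun h => h0R (h ▸ hbR)
  have hchnode : champG beatsN (BT.node L R) =
      if beatsN 0 b then 0 else b := by
    rw [champG, hcL, ← hbdef]
  have hbeats0b : beatsN 0 b := by
    by_contra hcon
    rw [hchnode, if_neg hcon] at hc0
    exact hbne0 hc0
  have hfull : ∀ x, x < 2 ^ (n + 1) → x ∈ (BT.node L R).leaves := by
    have hlen : (BT.node L R).leaves.length = 2 ^ (n + 1) := leaves_length _
    intro x hx
    exact list_full hnd (fun y hy => hlen ▸ hb y hy) x (by rw [hlen]; exact hx)
  have hhiR : ∃ x ∈ R.leaves, 2 ^ n ≤ x := by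
    by_contra hcon
    push_neg at hcon
    have hhl : ∀ y, 2 ^ n ≤ y → y < 2 ^ (n + 1) → y ∈ L.leaves := by
      intro y h1 h2
      have := hfull y h2
      rw [BT.leaves, List.mem_append] at this
      rcases this with h | h
      · exact h
      · exact absurd h1 (not_le.mpr (hcon y h))
    have hlen : L.leaves.length = 2 ^ n := leaves_length _
    have := too_many hndL n hhl h0L (by positivity)
    omega
  have hbhigh : 2 ^ n ≤ b :=
    high_champ R (fun y hy => hb y (hsubR y hy)) h0R hhiR
  have hbbound : b < 2 ^ (n + 1) := hb _ (hsubR _ hbR)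
  have hbpow : b = 2 ^ n := by
    have hp := (beats0 (Nat.pos_of_ne_zero hbne0)).mp hbeats0b
    have := power_between (m := n) (hp ▸ hbhigh) (hp ▸ hbbound)
    omega
  have hLlow : ∀ x ∈ L.leaves, x < 2 ^ n := by
    intro x hx
    by_contra hcon
    push_neg at hcon
    have h2m := zero_champ_high_mem L hndL (fun y hy => hb y (hsubL y hy)) hcL ⟨x, hx, hcon⟩
    exact hdisj _ h2m (hbpow ▸ hbR)
  have hRhigh : ∀ x ∈ R.leaves, 2 ^ n ≤ x := by
    intro x hx
    by_contra hcon
    push_neg at hcon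
    have hhr : ∀ y, 2 ^ n ≤ y → y < 2 ^ (n + 1) → y ∈ R.leaves := by
      intro y h1 h2
      have := hfull y h2
      rw [BT.leaves, List.mem_append] at this
      rcases this with h | h
      · exact absurd h1 (not_le.mpr (hLlow y h))
      · exact h
    have hlen : R.leaves.length = 2 ^ n := leaves_length _
    have := too_many hndR n hhr hx hcon
    omega
  intro p hp
  rw [matchesG, List.mem_cons, List.mem_append] at hp
  rcases hp with hp | hp | hp
  · -- root match : p = (0, b)
    rw [hcL, ← hbdef, if_pos hbeats0b] at hp
    subst hp
    have eL : champG (swapRel beatsN 0 b) L = 0 := by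
      refine (champG_congr L ?_ hndL).trans hcL
      intro x hx y hy _
      refine swapRel_iff beatsN ?_ ?_
      · exact fun h => hdisj y hy (by rw [h.2]; exact hbR)
      · exact fun h => hdisj x hx (by rw [h.1]; exact hbR)
    have eR : champG (swapRel beatsN 0 b) R = b := by
      refine (champG_congr R ?_ hndR).trans hbdef.symm
      intro x hx y hy _
      refine swapRel_iff beatsN ?_ ?_
      · exact fun h => h0R (h.1 ▸ hx)
      · exact fun h => h0R (h.2 ▸ hy)
    have hnb : ¬ swapRel beatsN 0 b 0 b := by
      rw [swapRel_ab, hbpow]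
      exact not_beats_pow_zero n
    rw [champG, eL, eR, if_neg hnb]
    exact hbne0
  · -- match inside L
    have hmem := matchesG_mem_leaves L p hp
    have hp1L := hmem.1
    have hp2L := hmem.2
    have hwL : champG (swapRel beatsN p.1 p.2) L ≠ 0 := IH L hndL hLlow hcL p hp
    have eR : champG (swapRel beatsN p.1 p.2) R = b := by
      refine (champG_congr R ?_ hndR).trans hbdef.symm
      intro x hx y hy _
      refine swapRel_iff beatsN ?_ ?_
      · exact fun h => hdisj p.1 hp1L (h.1 ▸ hx)
      · exact fun h => hdisj p.2 hp2L (h.1 ▸ hx)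
    rw [champG, eR]
    by_cases hcc : swapRel beatsN p.1 p.2 (champG (swapRel beatsN p.1 p.2) L) b
    · rw [if_pos hcc]; exact hwL
    · rw [if_neg hcc]; exact hbne0
  · -- match inside R
    have hmem := matchesG_mem_leaves R p hp
    have hp1R := hmem.1
    have hp2R := hmem.2
    have hp1h : 2 ^ n ≤ p.1 := hRhigh _ hp1R
    have hp2h : 2 ^ n ≤ p.2 := hRhigh _ hp2R
    have hpne : p.1 ≠ p.2 := matchesG_ne R hndR p hp
    set φ : ℕ → ℕ := fun x => x - 2 ^ n with hφ
    have hshift : ∀ x ∈ R.leaves, ∀ y ∈ R.leaves, x ≠ y → (beatsN x y ↔ beatsN (φ x) (φ y)) := by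
      intro x hx y hy _
      have hx1 := hRhigh _ hx
      have hx2 := hb _ (hsubR _ hx)
      have hy1 := hRhigh _ hy
      have hy2 := hb _ (hsubR _ hy)
      have ex : 2 ^ n + φ x = x := by simp only [hφ]; omega
      have ey : 2 ^ n + φ y = y := by simp only [hφ]; omega
      have hφx : φ x < 2 ^ n := by
        have h2 : (2:ℕ) ^ (n+1) = 2 ^ n + 2 ^ n := by ring
        simp only [hφ]; omega
      have hφy : φ y < 2 ^ n := by
        have h2 : (2:ℕ) ^ (n+1) = 2 ^ n + 2 ^ n := by ring
        simp only [hφ]; omega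
      rw [← ex, ← ey]
      rw [shift_beats hφx hφy]
      rw [ex, ey]
    have hndR0 : (BT.map φ R).leaves.Nodup := by
      rw [leaves_map]
      refine List.Nodup.map_on ?_ hndR
      intro x hx y hy hxy
      have := hRhigh _ hx
      have := hRhigh _ hy
      simp only [hφ] at hxy
      omega
    have hbound0 : ∀ x ∈ (BT.map φ R).leaves, x < 2 ^ n := by
      rw [leaves_map]
      intro x hx
      rw [List.mem_map] at hx
      obtain ⟨y, hy, rfl⟩ := hx
      have := hb _ (hsubR _ hy)
      have h2 : (2:ℕ) ^ (n+1) = 2 ^ n + 2 ^ n := by ring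
      simp only [hφ]
      omega
    have hch0 : champG beatsN (BT.map φ R) = 0 := by
      rw [champG_map φ R hshift hndR, ← hbdef, hbpow]
      simp [hφ]
    have hq : (φ p.1, φ p.2) ∈ matchesG beatsN (BT.map φ R) := by
      rw [matchesG_map φ R hshift hndR]
      rw [List.mem_map]
      exact ⟨p, hp, rfl⟩
    have hIH := IH (BT.map φ R) hndR0 hbound0 hch0 (φ p.1, φ p.2) hq
    -- bridge champion of swapped relation
    have hbridge : champG (swapRel beatsN (φ p.1) (φ p.2)) (BT.map φ R) =
        φ (champG (swapRel beatsN p.1 p.2) R) := by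
      refine champG_map φ R ?_ hndR
      intro x hx y hy hxy
      have hx1 := hRhigh _ hx
      have hy1 := hRhigh _ hy
      have hφinj : ∀ u ∈ R.leaves, ∀ v ∈ R.leaves, φ u = φ v → u = v := by
        intro u hu v hv huv
        have := hRhigh _ hu
        have := hRhigh _ hv
        simp only [hφ] at huv
        omega
      by_cases h1 : x = p.1 ∧ y = p.2
      · obtain ⟨rfl, rfl⟩ := h1
        rw [swapRel_ab, swapRel_ab]
        exact hshift _ hp2R _ hp1R hpne.symm
      · by_cases h2 : x = p.2 ∧ y = p.1
        · obtain ⟨h2a, h2b⟩ := h2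
          have e2 : swapRel beatsN p.1 p.2 x y ↔ beatsN p.1 p.2 := by
            unfold swapRel
            rw [if_neg (fun h : x = p.1 ∧ y = p.2 => hpne (h.1.symm.trans h2a)),
              if_pos ⟨h2a, h2b⟩]
          have e3 : swapRel beatsN (φ p.1) (φ p.2) (φ x) (φ y) ↔
              beatsN (φ p.1) (φ p.2) := by
            unfold swapRel
            rw [if_neg (fun h : φ x = φ p.1 ∧ φ y = φ p.2 =>
                hpne (hφinj _ hp1R _ hp2R (by rw [← h.1, h2a]))),
              if_pos ⟨by rw [h2a], by rw [h2b]⟩]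
          rw [e2, e3]
          exact hshift _ hp1R _ hp2R hpne
        · have c1 : ¬(φ x = φ p.1 ∧ φ y = φ p.2) := by
            rintro ⟨ha, hb'⟩
            exact h1 ⟨hφinj _ hx _ hp1R ha, hφinj _ hy _ hp2R hb'⟩
          have c2 : ¬(φ x = φ p.2 ∧ φ y = φ p.1) := by
            rintro ⟨ha, hb'⟩
            exact h2 ⟨hφinj _ hx _ hp2R ha, hφinj _ hy _ hp1R hb'⟩
          rw [swapRel_iff beatsN h1 h2, swapRel_iff beatsN c1 c2]
          exact hshift _ hx _ hy hxy
    set w := champG (swapRel beatsN p.1 p.2) R with hwdef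
    have hwR : w ∈ R.leaves := champG_mem _ _
    have hwhigh := hRhigh _ hwR
    have hwbound := hb _ (hsubR _ hwR)
    have hwne : φ w ≠ 0 := by rw [← hbridge]; exact hIH
    have hwgt : 2 ^ n < w := by
      simp only [hφ] at hwne
      omega
    -- left champion unchanged
    have eL : champG (swapRel beatsN p.1 p.2) L = 0 := by
      refine (champG_congr L ?_ hndL).trans hcL
      intro x hx y hy _
      have hx' := hLlow _ hx
      refine swapRel_iff beatsN ?_ ?_
      · exact fun h => by have := h.1 ▸ hx'; omega
      · exact fun h => by have := h.1 ▸ hx'; omega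
    have hroot : ¬ swapRel beatsN p.1 p.2 0 w := by
      have e0 : swapRel beatsN p.1 p.2 0 w ↔ beatsN 0 w := by
        refine swapRel_iff beatsN ?_ ?_
        · rintro ⟨h0', _⟩
          have : (0:ℕ) < 2 ^ n := by positivity
          omega
        · rintro ⟨h0', _⟩
          have : (0:ℕ) < 2 ^ n := by positivity
          omega
      rw [e0, beats0 (by omega)]
      exact not_power_between hwgt hwbound
    rw [champG, eL, ← hwdef, if_neg hroot]
    omega

lemma main_crucial : ∀ (n : ℕ) (T : BT ℕ n), T.leaves.Nodup →
    (∀ x ∈ T.leaves, x < 2 ^ n) → champG beatsN T = 0 →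
    ∀ p ∈ matchesG beatsN T, champG (swapRel beatsN p.1 p.2) T ≠ 0
  | 0, .leaf a, _, _, _, p, hp => by simp [matchesG] at hp
  | n + 1, .node L R, hnd, hb, hc0, p, hp => by
      obtain ⟨hndL, hndR, hdisj⟩ := nodup_node hnd
      have hneLR : champG beatsN L ≠ champG beatsN R := by
        intro he
        exact hdisj _ (champG_mem beatsN L) (he ▸ champG_mem beatsN R)
      by_cases hcase : beatsN (champG beatsN L) (champG beatsN R)
      · have hcL : champG beatsN L = 0 := by
          rw [champG, if_pos hcase] at hc0
          exact hc0
        exact core (main_crucial n) L R hnd hb hc0 hcL p hp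
      · have hcR : champG beatsN R = 0 := by
          rw [champG, if_neg hcase] at hc0
          exact hc0
        have hnd' : (BT.node R L).leaves.Nodup := by
          rw [BT.leaves, List.nodup_append]
          refine ⟨hndR, hndL, ?_⟩
          intro x hx y hy hxy
          subst hxy
          exact hdisj _ hy hx
        have hb' : ∀ x ∈ (BT.node R L).leaves, x < 2 ^ (n + 1) := by
          intro x hx
          rw [BT.leaves, List.mem_append] at hx
          apply hb
          rw [BT.leaves, List.mem_append]
          tauto
        have hcomm0 : champG beatsN (BT.node R L) = 0 := by
          rw [← champ_node_comm beatsN_asymm hneLR]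
          exact hc0
        have hp' : p ∈ matchesG beatsN (BT.node R L) :=
          (matches_node_comm beatsN_asymm hneLR p).mp hp
        have hres := core (main_crucial n) R L hnd' hb' hcomm0 hcR p hp'
        have hpne : p.1 ≠ p.2 := matchesG_ne _ hnd p hp
        have hasym' : Asymm (swapRel beatsN p.1 p.2) := swapRel_asymm beatsN_asymm hpne
        have hne' : champG (swapRel beatsN p.1 p.2) L ≠ champG (swapRel beatsN p.1 p.2) R := by
          intro he
          exact hdisj _ (champG_mem _ L) (he ▸ champG_mem _ R)
        rw [champ_node_comm hasym' hne']
        exact hres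

end KTaux

namespace KTaux

open scoped Classical

variable {N : ℕ}

lemma wd_support (P : Fin N → Fin N → ℝ) : ∀ {r : ℕ} (t : BT (Fin N) r) (i : Fin N),
    i ∉ t.leaves → wd P t i = 0
  | _, .leaf a, i, hi => by
      have : i ≠ a := by simpa [BT.leaves] using hi
      simp [wd, this]
  | _, .node A B, i, hi => by
      rw [BT.leaves, List.mem_append] at hi
      push_neg at hi
      simp only [wd]
      rw [wd_support P A i hi.1, wd_support P B i hi.2]
      ring

lemma mem_of_wd_ne (P : Fin N → Fin N → ℝ) {r : ℕ} {t : BT (Fin N) r} {i : Fin N}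
    (h : wd P t i ≠ 0) : i ∈ t.leaves := by
  by_contra hc
  exact h (wd_support P t i hc)

lemma prod_sum_congr {x : ℝ} {y : Fin N → ℝ} {g g' : Fin N → ℝ}
    (h : x ≠ 0 → ∀ j, y j ≠ 0 → g j = g' j) :
    x * (∑ j, y j * g j) = x * (∑ j, y j * g' j) := by
  by_cases hx : x = 0
  · rw [hx, zero_mul, zero_mul]
  · congr 1
    apply Finset.sum_congr rfl
    intro j _
    by_cases hy : y j = 0
    · rw [hy, zero_mul, zero_mul]
    · rw [h hx j hy]

lemma wd_congr {P P' : Fin N → Fin N → ℝ} : ∀ {r : ℕ} (t : BT (Fin N) r),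
    (∀ x ∈ t.leaves, ∀ y ∈ t.leaves, P x y = P' x y) → ∀ i, wd P t i = wd P' t i
  | _, .leaf a, _, i => by simp [wd]
  | _, .node A B, h, i => by
      have hsubA : ∀ x ∈ A.leaves, x ∈ (BT.node A B).leaves := by
        intro x hx; rw [BT.leaves, List.mem_append]; exact Or.inl hx
      have hsubB : ∀ x ∈ B.leaves, x ∈ (BT.node A B).leaves := by
        intro x hx; rw [BT.leaves, List.mem_append]; exact Or.inr hx
      have eA : ∀ j, wd P A j = wd P' A j :=
        wd_congr A (fun x hx y hy => h x (hsubA x hx) y (hsubA y hy))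
      have eB : ∀ j, wd P B j = wd P' B j :=
        wd_congr B (fun x hx y hy => h x (hsubB x hx) y (hsubB y hy))
      simp only [wd]
      rw [eA i, eB i]
      have sA : ∀ j, wd P A j * P i j = wd P' A j * P i j := fun j => by rw [eA j]
      have sB : ∀ j, wd P B j * P i j = wd P' B j * P i j := fun j => by rw [eB j]
      rw [Finset.sum_congr rfl (fun j _ => sB j), Finset.sum_congr rfl (fun j _ => sA j)]
      congr 1
      · apply prod_sum_congr
        intro hx j hy
        exact h i (hsubA i (mem_of_wd_ne P' hx)) j (hsubB j (mem_of_wd_ne P' hy))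
      · apply prod_sum_congr
        intro hx j hy
        exact h i (hsubB i (mem_of_wd_ne P' hx)) j (hsubA j (mem_of_wd_ne P' hy))

end KTaux
namespace KTaux

open scoped Classical

variable {N : ℕ}

lemma wd_nonneg {P : Fin N → Fin N → ℝ} (hP : ∀ i j : Fin N, i ≠ j → 0 ≤ P i j) :
    ∀ {r : ℕ} (t : BT (Fin N) r), t.leaves.Nodup → ∀ i, 0 ≤ wd P t i
  | _, .leaf a, _, i => by
      simp only [wd]
      split <;> norm_num
  | _, .node A B, hnd, i => by
      obtain ⟨hA, hB, hAB⟩ := nodup_node hnd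
      simp only [wd]
      have h1 : 0 ≤ wd P A i * ∑ j, wd P B j * P i j := by
        by_cases hx : wd P A i = 0
        · rw [hx, zero_mul]
        · have hiX : i ∈ A.leaves := mem_of_wd_ne P hx
          have hiY : i ∉ B.leaves := hAB i hiX
          apply mul_nonneg (wd_nonneg hP A hA i)
          apply Finset.sum_nonneg
          intro j _
          by_cases hj : j = i
          · rw [hj, wd_support P B i hiY, zero_mul]
          · exact mul_nonneg (wd_nonneg hP B hB j) (hP i j (Ne.symm hj))
      have h2 : 0 ≤ wd P B i * ∑ j, wd P A j * P i j := by
        by_cases hx : wd P B i = 0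
        · rw [hx, zero_mul]
        · have hiX : i ∈ B.leaves := mem_of_wd_ne P hx
          have hiY : i ∉ A.leaves := fun hy => hAB i hy hiX
          apply mul_nonneg (wd_nonneg hP B hB i)
          apply Finset.sum_nonneg
          intro j _
          by_cases hj : j = i
          · rw [hj, wd_support P A i hiY, zero_mul]
          · exact mul_nonneg (wd_nonneg hP A hA j) (hP i j (Ne.symm hj))
      linarith

lemma wd_det {P : Fin N → Fin N → ℝ}
    (hdet : ∀ i j : Fin N, i ≠ j → P i j = 1 ∨ P i j = 0)
    (hsum : ∀ i j : Fin N, i ≠ j → P i j + P j i = 1) :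
    ∀ {r : ℕ} (t : BT (Fin N) r), t.leaves.Nodup →
    ∀ i, wd P t i = if i = champG (fun a b => P a b = 1) t then 1 else 0
  | _, .leaf a, _, i => by simp [wd, champG]; by_cases h : i = a <;> simp [h]
  | _, .node A B, hnd, i => by
      obtain ⟨hA, hB, hAB⟩ := nodup_node hnd
      have eA := wd_det hdet hsum A hA
      have eB := wd_det hdet hsum B hB
      simp only [wd]
      rw [eA i, eB i]
      have sumB : (∑ j, wd P B j * P i j)
          = P i (champG (fun a b => P a b = 1) B) := by
        rw [Finset.sum_congr rfl (fun j _ => by rw [eB j])]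
        rw [Finset.sum_eq_single (champG (fun a b => P a b = 1) B)]
        · rw [if_pos rfl, one_mul]
        · intro j _ hj
          rw [if_neg hj, zero_mul]
        · intro hcon
          exact absurd (Finset.mem_univ _) hcon
      have sumA : (∑ j, wd P A j * P i j)
          = P i (champG (fun a b => P a b = 1) A) := by
        rw [Finset.sum_congr rfl (fun j _ => by rw [eA j])]
        rw [Finset.sum_eq_single (champG (fun a b => P a b = 1) A)]
        · rw [if_pos rfl, one_mul]
        · intro j _ hj
          rw [if_neg hj, zero_mul]
        · intro hcon
          exact absurd (Finset.mem_univ _) hcon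
      rw [sumA, sumB, champG]
      set a := champG (fun a b => P a b = 1) A with ha
      set b := champG (fun a b => P a b = 1) B with hb
      have hane : a ≠ b := by
        intro he
        apply hAB a
        · rw [ha]; exact champG_mem _ A
        · rw [he, hb]; exact champG_mem _ B
      by_cases hab : P a b = 1
      · have hba : P b a = 0 := by
          have := hsum a b hane
          linarith
        rw [if_pos hab]
        by_cases hia : i = a
        · rw [hia, if_pos rfl, if_neg hane]
          linarith [hab]
        · by_cases hib : i = b
          · rw [hib, if_neg (fun h : b = a => hane h.symm), if_pos rfl]
            linarith [hba]
          · rw [if_neg hia, if_neg hib]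
            ring
      · have hab0 : P a b = 0 := (hdet a b hane).resolve_left hab
        have hba : P b a = 1 := by
          have := hsum a b hane
          linarith
        rw [if_neg hab]
        by_cases hib : i = b
        · rw [hib, if_neg (fun h : b = a => hane h.symm), if_pos rfl]
          linarith [hba]
        · by_cases hia : i = a
          · rw [hia, if_pos rfl, if_neg hane]
            linarith [hab0]
          · rw [if_neg hia, if_neg hib]
            ring

end KTaux

namespace KTaux

open scoped Classical

def IsExp (f : ℝ → ℝ) (a b : ℝ) : Prop :=
  ∃ R : Polynomial ℝ, ∀ ε : ℝ, f ε = a + b * ε + ε ^ 2 * R.eval ε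

lemma IsExp.const (c : ℝ) : IsExp (fun _ => c) c 0 := ⟨0, fun ε => by simp⟩

lemma IsExp.linear (a b : ℝ) : IsExp (fun ε => a + b * ε) a b := ⟨0, fun ε => by simp⟩

lemma IsExp.add {f g : ℝ → ℝ} {a b c d : ℝ} (hf : IsExp f a b) (hg : IsExp g c d) :
    IsExp (fun ε => f ε + g ε) (a + c) (b + d) := by
  obtain ⟨R, hR⟩ := hf
  obtain ⟨T, hT⟩ := hg
  refine ⟨R + T, fun ε => ?_⟩
  show f ε + g ε = _
  rw [hR, hT]
  simp only [Polynomial.eval_add]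
  ring

lemma IsExp.mul {f g : ℝ → ℝ} {a b c d : ℝ} (hf : IsExp f a b) (hg : IsExp g c d) :
    IsExp (fun ε => f ε * g ε) (a * c) (a * d + b * c) := by
  obtain ⟨R, hR⟩ := hf
  obtain ⟨T, hT⟩ := hg
  refine ⟨Polynomial.C (b * d) + Polynomial.C a * T + Polynomial.C c * R
    + Polynomial.C b * Polynomial.X * T + Polynomial.C d * Polynomial.X * R
    + Polynomial.X ^ 2 * R * T, fun ε => ?_⟩
  show f ε * g ε = _
  rw [hR, hT]
  simp only [Polynomial.eval_add, Polynomial.eval_mul, Polynomial.eval_pow,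
    Polynomial.eval_C, Polynomial.eval_X]
  ring

lemma IsExp.funext {f g : ℝ → ℝ} {a b : ℝ} (hf : IsExp f a b) (h : ∀ ε, f ε = g ε) :
    IsExp g a b := by
  obtain ⟨R, hR⟩ := hf
  exact ⟨R, fun ε => by rw [← h ε, hR]⟩

lemma IsExp.congr_b {f : ℝ → ℝ} {a b b' : ℝ} (hf : IsExp f a b) (h : b = b') :
    IsExp f a b' := h ▸ hf

lemma IsExp.sum {ι : Type*} (s : Finset ι) (f : ι → ℝ → ℝ) (a b : ι → ℝ)
    (h : ∀ j ∈ s, IsExp (f j) (a j) (b j)) :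
    IsExp (fun ε => ∑ j ∈ s, f j ε) (∑ j ∈ s, a j) (∑ j ∈ s, b j) := by
  induction s using Finset.induction with
  | empty => simpa using IsExp.const 0
  | @insert x s hx ih =>
      simp only [Finset.sum_insert hx]
      exact (h x (Finset.mem_insert_self x s)).add
        (ih (fun j hj => h j (Finset.mem_insert_of_mem hj)))

variable {N : ℕ}

lemma swapPair_eq {P : Fin N → Fin N → ℝ} {a b x y : Fin N}
    (h1 : ¬(x = a ∧ y = b)) (h2 : ¬(x = b ∧ y = a)) : swapPair P a b x y = P x y := by
  unfold swapPair
  rw [if_neg h1, if_neg h2]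

lemma swapPair_ab (P : Fin N → Fin N → ℝ) (a b : Fin N) :
    swapPair P a b a b = P b a := by
  unfold swapPair
  rw [if_pos ⟨rfl, rfl⟩]

lemma swapPair_ba (P : Fin N → Fin N → ℝ) {a b : Fin N} (hab : a ≠ b) :
    swapPair P a b b a = P a b := by
  unfold swapPair
  rw [if_neg (fun h : b = a ∧ a = b => hab h.2), if_pos ⟨rfl, rfl⟩]

lemma mul_sum_congr {x : ℝ} {F G : Fin N → ℝ} (h : x ≠ 0 → ∀ j, F j = G j) :
    x * (∑ j, F j) = x * (∑ j, G j) := by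
  by_cases hx : x = 0
  · rw [hx, zero_mul, zero_mul]
  · rw [Finset.sum_congr rfl (fun j _ => h hx j)]

lemma detPerturb_eq (P : Fin N → Fin N → ℝ) (S : Finset (Fin N × Fin N))
    (hS1 : ∀ m ∈ S, m.1 ≠ m.2) (hS2 : ∀ m ∈ S, P m.1 m.2 = 1 ∧ P m.2 m.1 = 0)
    (hS3 : ∀ m ∈ S, (m.2, m.1) ∉ S) (ε : ℝ) (i j : Fin N) :
    detPerturb P S ε i j = P i j + ε * ∑ m ∈ S, (swapPair P m.1 m.2 i j - P i j) := by
  unfold detPerturb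
  by_cases h1 : (i, j) ∈ S
  · rw [if_pos h1]
    have hq : ∑ m ∈ S, (swapPair P m.1 m.2 i j - P i j) = -1 := by
      rw [Finset.sum_eq_single (i, j)]
      · rw [swapPair_ab, (hS2 _ h1).2, (hS2 _ h1).1]
        norm_num
      · intro m hm hne
        rw [swapPair_eq, sub_self]
        · rintro ⟨e1, e2⟩
          exact hne (Prod.ext_iff.mpr ⟨e1.symm, e2.symm⟩)
        · rintro ⟨e1, e2⟩
          apply hS3 m hm
          have : m = (j, i) := Prod.ext_iff.mpr ⟨e2.symm, e1.symm⟩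
          rw [this]
          exact h1
      · intro hcon
        exact absurd h1 hcon
    rw [hq, (hS2 _ h1).1]
    ring
  · rw [if_neg h1]
    by_cases h2 : (j, i) ∈ S
    · rw [if_pos h2]
      have hq : ∑ m ∈ S, (swapPair P m.1 m.2 i j - P i j) = 1 := by
        rw [Finset.sum_eq_single (j, i)]
        · rw [swapPair_ba P (hS1 _ h2)]
          have e1 : P (j, i).1 (j, i).2 = 1 := (hS2 _ h2).1
          have e2 : P (j, i).2 (j, i).1 = 0 := (hS2 _ h2).2
          simp only at e1 e2
          rw [e1, e2]
          norm_num
        · intro m hm hne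
          rw [swapPair_eq, sub_self]
          · rintro ⟨e1, e2⟩
            exact h1 (by rw [← (Prod.ext_iff.mpr ⟨e1.symm, e2.symm⟩ : m = (i, j))]; exact hm)
          · rintro ⟨e1, e2⟩
            exact hne (Prod.ext_iff.mpr ⟨e2.symm, e1.symm⟩)
        · intro hcon
          exact absurd h2 hcon
      have e2 : P (j, i).2 (j, i).1 = 0 := (hS2 _ h2).2
      simp only at e2
      rw [hq, e2]
      ring
    · rw [if_neg h2]
      have hq : ∑ m ∈ S, (swapPair P m.1 m.2 i j - P i j) = 0 := by
        apply Finset.sum_eq_zero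
        intro m hm
        rw [swapPair_eq, sub_self]
        · rintro ⟨e1, e2⟩
          exact h1 (by rw [← (Prod.ext_iff.mpr ⟨e1.symm, e2.symm⟩ : m = (i, j))]; exact hm)
        · rintro ⟨e1, e2⟩
          exact h2 (by rw [← (Prod.ext_iff.mpr ⟨e2.symm, e1.symm⟩ : m = (j, i))]; exact hm)
      rw [hq]
      ring

end KTaux

namespace KTaux

open scoped Classical

variable {N : ℕ}

lemma per_m (P : Fin N → Fin N → ℝ) {r : ℕ} (L R : BT (Fin N) r)
    (hnd : (BT.node L R).leaves.Nodup) (i : Fin N) (a b : Fin N) :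
    wd (swapPair P a b) (BT.node L R) i - wd P (BT.node L R) i
    = wd P L i * (∑ j, (wd P R j * (swapPair P a b i j - P i j)
          + (wd (swapPair P a b) R j - wd P R j) * P i j))
      + (wd (swapPair P a b) L i - wd P L i) * (∑ j, wd P R j * P i j)
      + (wd P R i * (∑ j, (wd P L j * (swapPair P a b i j - P i j)
          + (wd (swapPair P a b) L j - wd P L j) * P i j))
      + (wd (swapPair P a b) R i - wd P R i) * (∑ j, wd P L j * P i j)) := by
  obtain ⟨hndL, hndR, hdisj⟩ := nodup_node hnd
  simp only [wd]
  by_cases hL : a ∈ L.leaves ∧ b ∈ L.leaves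
  · have haR : a ∉ R.leaves := fun h => hdisj a hL.1 h
    have hbR : b ∉ R.leaves := fun h => hdisj b hL.2 h
    have eR : ∀ j, wd (swapPair P a b) R j = wd P R j :=
      wd_congr R (fun x hx y hy =>
        swapPair_eq (fun h => haR (h.1 ▸ hx)) (fun h => hbR (h.1 ▸ hx)))
    have c3 : wd (swapPair P a b) L i * (∑ j, wd (swapPair P a b) R j * swapPair P a b i j)
        = wd (swapPair P a b) L i * (∑ j, wd P R j * P i j) := by
      rw [Finset.sum_congr rfl (fun j _ => by rw [eR j])]
      apply prod_sum_congr
      intro hx j hy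
      have hjR : j ∈ R.leaves := mem_of_wd_ne P hy
      exact swapPair_eq (fun h => hbR (h.2 ▸ hjR)) (fun h => haR (h.2 ▸ hjR))
    have c4 : wd (swapPair P a b) R i * (∑ j, wd (swapPair P a b) L j * swapPair P a b i j)
        = wd P R i * (∑ j, wd (swapPair P a b) L j * P i j) := by
      rw [eR i]
      apply prod_sum_congr
      intro hx j hy
      have hiR : i ∈ R.leaves := mem_of_wd_ne P hx
      exact swapPair_eq (fun h => haR (h.1 ▸ hiR)) (fun h => hbR (h.1 ▸ hiR))
    have z1 : wd P L i * (∑ j, (wd P R j * (swapPair P a b i j - P i j)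
        + (wd (swapPair P a b) R j - wd P R j) * P i j)) = 0 := by
      rw [Finset.sum_congr rfl (fun j _ => by rw [eR j, sub_self, zero_mul, add_zero])]
      have : wd P L i * (∑ j, wd P R j * (swapPair P a b i j - P i j))
          = wd P L i * (∑ j, wd P R j * 0) := by
        apply prod_sum_congr
        intro hx j hy
        have hjR := mem_of_wd_ne P hy
        rw [swapPair_eq (fun h : i = a ∧ j = b => hbR (h.2 ▸ hjR)) (fun h : i = b ∧ j = a => haR (h.2 ▸ hjR)), sub_self]
      rw [this]
      simp
    have z2 : wd P R i * (∑ j, (wd P L j * (swapPair P a b i j - P i j)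
        + (wd (swapPair P a b) L j - wd P L j) * P i j))
        = wd P R i * (∑ j, (wd (swapPair P a b) L j - wd P L j) * P i j) := by
      apply mul_sum_congr
      intro hx j
      have hiR := mem_of_wd_ne P hx
      by_cases hy : wd P L j = 0
      · rw [hy, zero_mul, zero_add]
      · rw [swapPair_eq (fun h : i = a ∧ j = b => haR (h.1 ▸ hiR)) (fun h : i = b ∧ j = a => hbR (h.1 ▸ hiR)), sub_self,
          mul_zero, zero_add]
    rw [c3, c4, z1, z2, eR i]
    have esplit : (∑ j, (wd (swapPair P a b) L j - wd P L j) * P i j)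
        = (∑ j, wd (swapPair P a b) L j * P i j) - (∑ j, wd P L j * P i j) := by
      rw [← Finset.sum_sub_distrib]
      apply Finset.sum_congr rfl
      intro j _
      ring
    rw [esplit]
    ring
  · by_cases hR : a ∈ R.leaves ∧ b ∈ R.leaves
    · have haL : a ∉ L.leaves := fun h => hdisj a h hR.1
      have hbL : b ∉ L.leaves := fun h => hdisj b h hR.2
      have eL : ∀ j, wd (swapPair P a b) L j = wd P L j :=
        wd_congr L (fun x hx y hy =>
          swapPair_eq (fun h => haL (h.1 ▸ hx)) (fun h => hbL (h.1 ▸ hx)))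
      have c3 : wd (swapPair P a b) L i * (∑ j, wd (swapPair P a b) R j * swapPair P a b i j)
          = wd P L i * (∑ j, wd (swapPair P a b) R j * P i j) := by
        rw [eL i]
        apply prod_sum_congr
        intro hx j hy
        have hiL : i ∈ L.leaves := mem_of_wd_ne P hx
        exact swapPair_eq (fun h => haL (h.1 ▸ hiL)) (fun h => hbL (h.1 ▸ hiL))
      have c4 : wd (swapPair P a b) R i * (∑ j, wd (swapPair P a b) L j * swapPair P a b i j)
          = wd (swapPair P a b) R i * (∑ j, wd P L j * P i j) := by
        rw [Finset.sum_congr rfl (fun j _ => by rw [eL j])]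
        apply prod_sum_congr
        intro hx j hy
        have hjL : j ∈ L.leaves := mem_of_wd_ne P hy
        exact swapPair_eq (fun h => hbL (h.2 ▸ hjL)) (fun h => haL (h.2 ▸ hjL))
      have z1 : wd P L i * (∑ j, (wd P R j * (swapPair P a b i j - P i j)
          + (wd (swapPair P a b) R j - wd P R j) * P i j))
          = wd P L i * (∑ j, (wd (swapPair P a b) R j - wd P R j) * P i j) := by
        apply mul_sum_congr
        intro hx j
        have hiL := mem_of_wd_ne P hx
        by_cases hy : wd P R j = 0
        · rw [hy, zero_mul, zero_add]
        · rw [swapPair_eq (fun h : i = a ∧ j = b => haL (h.1 ▸ hiL)) (fun h : i = b ∧ j = a => hbL (h.1 ▸ hiL)), sub_self,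
            mul_zero, zero_add]
      have z2 : wd P R i * (∑ j, (wd P L j * (swapPair P a b i j - P i j)
          + (wd (swapPair P a b) L j - wd P L j) * P i j)) = 0 := by
        rw [Finset.sum_congr rfl (fun j _ => by rw [eL j, sub_self, zero_mul, add_zero])]
        have : wd P R i * (∑ j, wd P L j * (swapPair P a b i j - P i j))
            = wd P R i * (∑ j, wd P L j * 0) := by
          apply prod_sum_congr
          intro hx j hy
          have hjL := mem_of_wd_ne P hy
          rw [swapPair_eq (fun h : i = a ∧ j = b => hbL (h.2 ▸ hjL)) (fun h : i = b ∧ j = a => haL (h.2 ▸ hjL)), sub_self]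
        rw [this]
        simp
      rw [c3, c4, z1, z2, eL i]
      have esplit : (∑ j, (wd (swapPair P a b) R j - wd P R j) * P i j)
          = (∑ j, wd (swapPair P a b) R j * P i j) - (∑ j, wd P R j * P i j) := by
        rw [← Finset.sum_sub_distrib]
        apply Finset.sum_congr rfl
        intro j _
        ring
      rw [esplit]
      ring
    · have eL : ∀ j, wd (swapPair P a b) L j = wd P L j :=
        wd_congr L (fun x hx y hy =>
          swapPair_eq (fun h => hL ⟨h.1 ▸ hx, h.2 ▸ hy⟩) (fun h => hL ⟨h.2 ▸ hy, h.1 ▸ hx⟩))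
      have eR : ∀ j, wd (swapPair P a b) R j = wd P R j :=
        wd_congr R (fun x hx y hy =>
          swapPair_eq (fun h => hR ⟨h.1 ▸ hx, h.2 ▸ hy⟩) (fun h => hR ⟨h.2 ▸ hy, h.1 ▸ hx⟩))
      have s1 : (∑ j, wd (swapPair P a b) R j * swapPair P a b i j)
          = ∑ j, wd P R j * swapPair P a b i j :=
        Finset.sum_congr rfl (fun j _ => by rw [eR j])
      have s2 : (∑ j, wd (swapPair P a b) L j * swapPair P a b i j)
          = ∑ j, wd P L j * swapPair P a b i j :=
        Finset.sum_congr rfl (fun j _ => by rw [eL j])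
      have s3 : (∑ j, (wd P R j * (swapPair P a b i j - P i j)
          + (wd (swapPair P a b) R j - wd P R j) * P i j))
          = (∑ j, wd P R j * swapPair P a b i j) - ∑ j, wd P R j * P i j := by
        rw [← Finset.sum_sub_distrib]
        apply Finset.sum_congr rfl
        intro j _
        rw [eR j]
        ring
      have s4 : (∑ j, (wd P L j * (swapPair P a b i j - P i j)
          + (wd (swapPair P a b) L j - wd P L j) * P i j))
          = (∑ j, wd P L j * swapPair P a b i j) - ∑ j, wd P L j * P i j := by
        rw [← Finset.sum_sub_distrib]
        apply Finset.sum_congr rfl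
        intro j _
        rw [eL j]
        ring
      rw [s1, s2, s3, s4, eL i, eR i]
      ring

end KTaux

namespace KTaux

open scoped Classical

variable {N : ℕ}

lemma IsExp.congr_all {f g : ℝ → ℝ} {a b a' b' : ℝ} (h : IsExp f a b)
    (ha : a = a') (hb : b = b') (hf : ∀ ε, f ε = g ε) : IsExp g a' b' :=
  ha ▸ hb ▸ (h.funext hf)

lemma ident (P : Fin N → Fin N → ℝ) (S : Finset (Fin N × Fin N)) {r : ℕ}
    (L R : BT (Fin N) r) (hnd : (BT.node L R).leaves.Nodup) (i : Fin N) :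
    wd P L i * (∑ j, (wd P R j * (∑ m ∈ S, (swapPair P m.1 m.2 i j - P i j))
        + (∑ m ∈ S, (wd (swapPair P m.1 m.2) R j - wd P R j)) * P i j))
    + (∑ m ∈ S, (wd (swapPair P m.1 m.2) L i - wd P L i)) * (∑ j, wd P R j * P i j)
    + (wd P R i * (∑ j, (wd P L j * (∑ m ∈ S, (swapPair P m.1 m.2 i j - P i j))
        + (∑ m ∈ S, (wd (swapPair P m.1 m.2) L j - wd P L j)) * P i j))
    + (∑ m ∈ S, (wd (swapPair P m.1 m.2) R i - wd P R i)) * (∑ j, wd P L j * P i j))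
    = ∑ m ∈ S, (wd (swapPair P m.1 m.2) (BT.node L R) i - wd P (BT.node L R) i) := by
  rw [Finset.sum_congr (rfl : S = S) (fun m _ => per_m P L R hnd i m.1 m.2)]
  have p1 : wd P L i * (∑ j, (wd P R j * (∑ m ∈ S, (swapPair P m.1 m.2 i j - P i j))
      + (∑ m ∈ S, (wd (swapPair P m.1 m.2) R j - wd P R j)) * P i j))
      = ∑ m ∈ S, (wd P L i * ∑ j, (wd P R j * (swapPair P m.1 m.2 i j - P i j)
        + (wd (swapPair P m.1 m.2) R j - wd P R j) * P i j)) := by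
    have e1 : ∀ j : Fin N, (wd P R j * (∑ m ∈ S, (swapPair P m.1 m.2 i j - P i j))
        + (∑ m ∈ S, (wd (swapPair P m.1 m.2) R j - wd P R j)) * P i j)
        = ∑ m ∈ S, (wd P R j * (swapPair P m.1 m.2 i j - P i j)
          + (wd (swapPair P m.1 m.2) R j - wd P R j) * P i j) := by
      intro j
      rw [Finset.mul_sum, Finset.sum_mul, ← Finset.sum_add_distrib]
    rw [Finset.sum_congr rfl (fun j _ => e1 j), Finset.sum_comm, Finset.mul_sum]
  have p3 : wd P R i * (∑ j, (wd P L j * (∑ m ∈ S, (swapPair P m.1 m.2 i j - P i j))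
      + (∑ m ∈ S, (wd (swapPair P m.1 m.2) L j - wd P L j)) * P i j))
      = ∑ m ∈ S, (wd P R i * ∑ j, (wd P L j * (swapPair P m.1 m.2 i j - P i j)
        + (wd (swapPair P m.1 m.2) L j - wd P L j) * P i j)) := by
    have e1 : ∀ j : Fin N, (wd P L j * (∑ m ∈ S, (swapPair P m.1 m.2 i j - P i j))
        + (∑ m ∈ S, (wd (swapPair P m.1 m.2) L j - wd P L j)) * P i j)
        = ∑ m ∈ S, (wd P L j * (swapPair P m.1 m.2 i j - P i j)
          + (wd (swapPair P m.1 m.2) L j - wd P L j) * P i j) := by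
      intro j
      rw [Finset.mul_sum, Finset.sum_mul, ← Finset.sum_add_distrib]
    rw [Finset.sum_congr rfl (fun j _ => e1 j), Finset.sum_comm, Finset.mul_sum]
  have p2 : (∑ m ∈ S, (wd (swapPair P m.1 m.2) L i - wd P L i)) * (∑ j, wd P R j * P i j)
      = ∑ m ∈ S, ((wd (swapPair P m.1 m.2) L i - wd P L i) * (∑ j, wd P R j * P i j)) :=
    Finset.sum_mul _ _ _
  have p4 : (∑ m ∈ S, (wd (swapPair P m.1 m.2) R i - wd P R i)) * (∑ j, wd P L j * P i j)
      = ∑ m ∈ S, ((wd (swapPair P m.1 m.2) R i - wd P R i) * (∑ j, wd P L j * P i j)) :=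
    Finset.sum_mul _ _ _
  rw [p1, p2, p3, p4, ← Finset.sum_add_distrib, ← Finset.sum_add_distrib,
    ← Finset.sum_add_distrib]

lemma exp_main (P : Fin N → Fin N → ℝ) (S : Finset (Fin N × Fin N))
    (hS1 : ∀ m ∈ S, m.1 ≠ m.2) (hS2 : ∀ m ∈ S, P m.1 m.2 = 1 ∧ P m.2 m.1 = 0)
    (hS3 : ∀ m ∈ S, (m.2, m.1) ∉ S) :
    ∀ {r : ℕ} (t : BT (Fin N) r), t.leaves.Nodup → ∀ i : Fin N,
    IsExp (fun ε => wd (detPerturb P S ε) t i) (wd P t i)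
      (∑ m ∈ S, (wd (swapPair P m.1 m.2) t i - wd P t i))
  | _, .leaf c, _, i => by
      have hv : ∀ ε : ℝ, wd P (BT.leaf c) i = wd (detPerturb P S ε) (BT.leaf c) i := by
        intro ε
        simp [wd]
      refine ((IsExp.const (wd P (BT.leaf c) i)).funext hv).congr_b ?_
      rw [Finset.sum_eq_zero]
      intro m _
      simp [wd]
  | _, .node L R, hnd, i => by
      obtain ⟨hndL, hndR, hdisj⟩ := nodup_node hnd
      have hL := exp_main P S hS1 hS2 hS3 L hndL
      have hR := exp_main P S hS1 hS2 hS3 R hndR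
      have hMR : IsExp (fun ε => ∑ j, wd (detPerturb P S ε) R j * detPerturb P S ε i j)
          (∑ j, wd P R j * P i j)
          (∑ j, (wd P R j * (∑ m ∈ S, (swapPair P m.1 m.2 i j - P i j))
            + (∑ m ∈ S, (wd (swapPair P m.1 m.2) R j - wd P R j)) * P i j)) := by
        apply IsExp.sum
        intro j _
        have hM : IsExp (fun ε => detPerturb P S ε i j) (P i j)
            (∑ m ∈ S, (swapPair P m.1 m.2 i j - P i j)) :=
          (IsExp.linear _ _).funext (fun ε => by
            rw [detPerturb_eq P S hS1 hS2 hS3 ε i j]; ring)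
        exact (hR j).mul hM
      have hML : IsExp (fun ε => ∑ j, wd (detPerturb P S ε) L j * detPerturb P S ε i j)
          (∑ j, wd P L j * P i j)
          (∑ j, (wd P L j * (∑ m ∈ S, (swapPair P m.1 m.2 i j - P i j))
            + (∑ m ∈ S, (wd (swapPair P m.1 m.2) L j - wd P L j)) * P i j)) := by
        apply IsExp.sum
        intro j _
        have hM : IsExp (fun ε => detPerturb P S ε i j) (P i j)
            (∑ m ∈ S, (swapPair P m.1 m.2 i j - P i j)) :=
          (IsExp.linear _ _).funext (fun ε => by
            rw [detPerturb_eq P S hS1 hS2 hS3 ε i j]; ring)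
        exact (hL j).mul hM
      have total := ((hL i).mul hMR).add ((hR i).mul hML)
      refine total.congr_all ?_ ?_ ?_
      · simp only [wd]
      · exact ident P S L R hnd i
      · intro ε
        simp only [wd]

end KTaux

namespace KTaux

open scoped Classical

lemma hardP_det (n : ℕ) : ∀ i j : Fin (2 ^ n), i ≠ j →
    hardP n i j = 1 ∨ hardP n i j = 0 := by
  intro i j _
  unfold hardP
  split_ifs <;> norm_num

lemma hardP_sum (n : ℕ) : ∀ i j : Fin (2 ^ n), i ≠ j →
    hardP n i j + hardP n j i = 1 := by
  intro i j hne
  have hv : (i : ℕ) ≠ (j : ℕ) := fun h => hne (Fin.ext h)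
  unfold hardP
  rw [if_neg hne, if_neg hne.symm]
  rcases lt_or_gt_of_ne hv with h | h
  · rw [if_pos h, if_neg (by omega : ¬ (j : ℕ) < (i : ℕ))]
    split_ifs <;> norm_num
  · rw [if_neg (by omega : ¬ (i : ℕ) < (j : ℕ)), if_pos h]
    split_ifs <;> norm_num

lemma hardP_rep (n : ℕ) : ∀ i j : Fin (2 ^ n), i ≠ j →
    (hardP n i j = 1 ↔ beatsN (i : ℕ) (j : ℕ)) := by
  intro i j hne
  have hv : (i : ℕ) ≠ (j : ℕ) := fun h => hne (Fin.ext h)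
  unfold hardP beatsN
  rw [if_neg hne]
  rcases lt_or_gt_of_ne hv with h | h
  · rw [if_pos h, if_pos h]
    split_ifs with hc
    · simp [hc]
    · simp [hc]
  · rw [if_neg (by omega : ¬ (i : ℕ) < (j : ℕ)), if_neg (by omega : ¬ (i : ℕ) < (j : ℕ))]
    split_ifs with hc
    · simp only [hc]
      norm_num
    · simp only [hc]
      norm_num

lemma swapPair_det {N : ℕ} {P : Fin N → Fin N → ℝ}
    (hdet : ∀ i j : Fin N, i ≠ j → P i j = 1 ∨ P i j = 0) {a b : Fin N} (hab : a ≠ b) :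
    ∀ i j : Fin N, i ≠ j → swapPair P a b i j = 1 ∨ swapPair P a b i j = 0 := by
  intro i j hij
  unfold swapPair
  split_ifs with h1 h2
  · exact hdet b a hab.symm
  · exact hdet a b hab
  · exact hdet i j hij

lemma swapPair_sum {N : ℕ} {P : Fin N → Fin N → ℝ}
    (hsum : ∀ i j : Fin N, i ≠ j → P i j + P j i = 1) {a b : Fin N} (hab : a ≠ b) :
    ∀ i j : Fin N, i ≠ j → swapPair P a b i j + swapPair P a b j i = 1 := by
  intro i j hij
  unfold swapPair
  by_cases h1 : i = a ∧ j = b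
  · rw [if_pos h1, if_neg (fun h : j = a ∧ i = b => hab (h1.1.symm.trans h.2)),
      if_pos ⟨h1.2, h1.1⟩]
    exact hsum b a hab.symm
  · by_cases h2 : i = b ∧ j = a
    · rw [if_neg h1, if_pos h2, if_pos ⟨h2.2, h2.1⟩]
      exact hsum a b hab
    · rw [if_neg h1, if_neg h2, if_neg (fun h : j = a ∧ i = b => h2 ⟨h.2, h.1⟩),
        if_neg (fun h : j = b ∧ i = a => h1 ⟨h.2, h.1⟩)]
      exact hsum i j hij

end KTaux

namespace KTaux

open scoped Classical

lemma assembly (n : ℕ) (σ : BT (Fin (2 ^ n)) n) (hσ : IsDraw σ) (i0 : Fin (2 ^ n))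
    (h0 : (i0 : ℕ) = 0) (hwin : wd (hardP n) σ i0 = 1) :
    ∃ Q : Polynomial ℝ, ∀ ε ∈ Set.Ioo (0 : ℝ) 1,
      wpe i0 (hardP n) ε σ ≤ 1 - ((2 : ℝ) ^ n - 1) * ε + ε ^ 2 * Q.eval ε := by
  classical
  set P := hardP n with hPdef
  have hdet := hardP_det n
  have hsum := hardP_sum n
  rw [← hPdef] at hdet hsum
  have hnodup : σ.leaves.Nodup := by
    rw [List.nodup_iff_count_le_one]
    intro a
    rw [hσ a]
  have hndN : ((σ.map Fin.val).leaves).Nodup := by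
    rw [leaves_map]
    exact hnodup.map Fin.val_injective
  have hboundN : ∀ x ∈ (σ.map Fin.val).leaves, x < 2 ^ n := by
    rw [leaves_map]
    intro x hx
    rw [List.mem_map] at hx
    obtain ⟨y, _, rfl⟩ := hx
    exact y.isLt
  have hcond : ∀ x ∈ σ.leaves, ∀ y ∈ σ.leaves, x ≠ y →
      ((fun a b : Fin (2 ^ n) => P a b = 1) x y ↔ beatsN (Fin.val x) (Fin.val y)) :=
    fun x _ y _ hxy => hardP_rep n x y hxy
  have hwd := wd_det hdet hsum σ hnodup i0
  have hchamp : champG (fun a b : Fin (2 ^ n) => P a b = 1) σ = i0 := by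
    by_cases h : i0 = champG (fun a b : Fin (2 ^ n) => P a b = 1) σ
    · exact h.symm
    · rw [hwin, if_neg h] at hwd
      norm_num at hwd
  have hchampN : champG beatsN (σ.map Fin.val) = 0 := by
    rw [champG_map Fin.val σ hcond hnodup, hchamp, h0]
  have hmatches := matchesG_map Fin.val σ hcond hnodup
  have hfPasym : Asymm (fun a b : Fin (2 ^ n) => P a b = 1) := by
    intro x y hxy
    have hs := hsum x y hxy
    constructor
    · intro h1 h2
      rw [h1, h2] at hs
      norm_num at hs
    · intro h2
      rcases hdet y x hxy.symm with h | h
      · exact absurd h h2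
      · rw [h] at hs
        linarith
  set S : Finset (Fin (2 ^ n) × Fin (2 ^ n)) :=
    (matchesG (fun a b : Fin (2 ^ n) => P a b = 1) σ).toFinset with hSdef
  have hS1 : ∀ m ∈ S, m.1 ≠ m.2 :=
    fun m hm => matchesG_ne σ hnodup m (List.mem_toFinset.mp hm)
  have hSwin : ∀ m ∈ S, P m.1 m.2 = 1 :=
    fun m hm => matchesG_winner hfPasym σ hnodup m (List.mem_toFinset.mp hm)
  have hS2 : ∀ m ∈ S, P m.1 m.2 = 1 ∧ P m.2 m.1 = 0 := by
    intro m hm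
    refine ⟨hSwin m hm, ?_⟩
    have := hsum m.1 m.2 (hS1 m hm)
    have h1 := hSwin m hm
    linarith
  have hS3 : ∀ m ∈ S, (m.2, m.1) ∉ S := by
    intro m hm hmem
    have h1 := hSwin m hm
    have h2 := hSwin _ hmem
    have := hsum m.1 m.2 (hS1 m hm)
    simp only at h2
    linarith
  have hScard : S.card = 2 ^ n - 1 := by
    rw [hSdef, List.toFinset_card_of_nodup (matchesG_nodup σ hnodup)]
    exact matchesG_length _ σ
  have hcru : ∀ m ∈ S, wd (swapPair P m.1 m.2) σ i0 = 0 := by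
    intro m hm
    have hmL := List.mem_toFinset.mp hm
    have hab : m.1 ≠ m.2 := hS1 m hm
    have hdet' := swapPair_det hdet hab
    have hsum' := swapPair_sum hsum hab
    have hwd' := wd_det hdet' hsum' σ hnodup i0
    have hcond' : ∀ x ∈ σ.leaves, ∀ y ∈ σ.leaves, x ≠ y →
        ((fun a b : Fin (2 ^ n) => swapPair P m.1 m.2 a b = 1) x y ↔
          swapRel beatsN (m.1 : ℕ) (m.2 : ℕ) (x : ℕ) (y : ℕ)) := by
      intro x _ y _ hxy
      show (swapPair P m.1 m.2 x y = 1) ↔ _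
      unfold swapPair swapRel
      by_cases h1 : x = m.1 ∧ y = m.2
      · rw [if_pos h1, if_pos ⟨by rw [h1.1], by rw [h1.2]⟩]
        exact hardP_rep n m.2 m.1 hab.symm
      · have h1' : ¬((x : ℕ) = (m.1 : ℕ) ∧ (y : ℕ) = (m.2 : ℕ)) :=
          fun h => h1 ⟨Fin.ext h.1, Fin.ext h.2⟩
        rw [if_neg h1, if_neg h1']
        by_cases h2 : x = m.2 ∧ y = m.1
        · rw [if_pos h2, if_pos ⟨by rw [h2.1], by rw [h2.2]⟩]
          exact hardP_rep n m.1 m.2 hab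
        · have h2' : ¬((x : ℕ) = (m.2 : ℕ) ∧ (y : ℕ) = (m.1 : ℕ)) :=
            fun h => h2 ⟨Fin.ext h.1, Fin.ext h.2⟩
          rw [if_neg h2, if_neg h2']
          exact hardP_rep n x y hxy
    have hbridge := champG_map Fin.val σ hcond' hnodup
    have hmemN : ((m.1 : ℕ), (m.2 : ℕ)) ∈ matchesG beatsN (σ.map Fin.val) := by
      rw [hmatches, List.mem_map]
      exact ⟨m, hmL, rfl⟩
    have hmain := main_crucial n (σ.map Fin.val) hndN hboundN hchampN
      ((m.1 : ℕ), (m.2 : ℕ)) hmemN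
    rw [hbridge] at hmain
    rw [hwd', if_neg (fun he : i0 = _ => hmain (by rw [← he, h0]))]
  obtain ⟨Qp, hQp⟩ := exp_main P S hS1 hS2 hS3 σ hnodup i0
  have hbval : (∑ m ∈ S, (wd (swapPair P m.1 m.2) σ i0 - wd P σ i0))
      = -((2 : ℝ) ^ n - 1) := by
    rw [Finset.sum_congr rfl (fun m hm => by rw [hcru m hm, hwin])]
    rw [Finset.sum_const, hScard, nsmul_eq_mul]
    have h1 : (1 : ℕ) ≤ 2 ^ n := Nat.one_le_two_pow
    rw [Nat.cast_sub h1]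
    push_cast
    ring
  refine ⟨Qp, ?_⟩
  intro ε hε
  obtain ⟨hε0, hε1⟩ := hε
  have hmem : detPerturb P S ε ∈ perturbs P ε := by
    constructor
    · intro i j hij
      unfold detPerturb
      by_cases h1 : (i, j) ∈ S
      · have h3 : (j, i) ∉ S := hS3 (i, j) h1
        rw [if_pos h1, if_neg h3, if_pos h1]
        refine ⟨by linarith, by linarith, by ring⟩
      · rw [if_neg h1]
        by_cases h2 : (j, i) ∈ S
        · rw [if_pos h2, if_pos h2]
          refine ⟨le_of_lt hε0, by linarith, by ring⟩
        · rw [if_neg h2, if_neg h2, if_neg h1]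
          have hd := hdet i j hij
          refine ⟨?_, ?_, hsum i j hij⟩
          · rcases hd with h | h <;> rw [h] <;> norm_num
          · rcases hd with h | h <;> rw [h] <;> norm_num
    · intro i j hij
      unfold detPerturb
      by_cases h1 : (i, j) ∈ S
      · rw [if_pos h1, show P i j = (1 : ℝ) from (hS2 (i, j) h1).1,
          show (1 : ℝ) - ε - 1 = -ε by ring, abs_neg, abs_of_pos hε0]
      · rw [if_neg h1]
        by_cases h2 : (j, i) ∈ S
        · rw [if_pos h2, show P i j = (0 : ℝ) from (hS2 (j, i) h2).2, sub_zero,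
            abs_of_pos hε0]
        · rw [if_neg h2, sub_self, abs_zero]
          exact le_of_lt hε0
  have hbdd : BddBelow ((fun P' => wd P' σ i0) '' perturbs P ε) := by
    refine ⟨0, ?_⟩
    rintro v ⟨P', hP', rfl⟩
    exact wd_nonneg (fun i j hij => (hP'.1 i j hij).1) σ hnodup i0
  have hle : wpe i0 P ε σ ≤ wd (detPerturb P S ε) σ i0 :=
    csInf_le hbdd ⟨detPerturb P S ε, hmem, rfl⟩
  have hval : wd (detPerturb P S ε) σ i0 = wd P σ i0
      + (∑ m ∈ S, (wd (swapPair P m.1 m.2) σ i0 - wd P σ i0)) * ε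
      + ε ^ 2 * Polynomial.eval ε Qp := hQp ε
  rw [hval, hbval, hwin] at hle
  linarith

end KTaux

/-- in the hard `n`-round tournament, every draw in which player 1
(index 0) surely wins satisfies
`wp_ε(1,P,σ) ≤ 1 - (N-1)ε + ε² Q(ε)` for all `ε ∈ (0,1)`, for some real polynomial `Q`. -/
theorem hard_tournament_nonrobust (n : ℕ) (hn : 1 ≤ n)
    (σ : BT (Fin (2 ^ n)) n) (hσ : IsDraw σ)
    (hwin : wd (hardP n) σ ⟨0, by positivity⟩ = 1) :
    ∃ Q : Polynomial ℝ, ∀ ε ∈ Set.Ioo (0 : ℝ) 1,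
      wpe ⟨0, by positivity⟩ (hardP n) ε σ ≤
        1 - ((2 : ℝ) ^ n - 1) * ε + ε ^ 2 * Q.eval ε := by
  exact KTaux.assembly n σ hσ ⟨0, by positivity⟩ rfl hwin
end

section
/- For every integer n ≥ 2, with N = 2^n, there exist a deterministic comparison matrix P for N players and two draws σ, σ' such that wp(1,P,σ) = 1 = wp(1,P,σ'), there is a polynomial Q with real coefficients satisfying wp_ε(1,P,σ) ≤ 1 − (N/2)·ε + ε²·Q(ε) for all ε ∈ (0,1), and wp_ε(1,P,σ') > 1 − (2n−1)·ε for all ε ∈ (0,1). (One may take the unbalanced tournament U_n with σ = (1,2,…,2^n) and σ' = (2^n, 2, 3, …, 2^n−1, 1).) -/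
section Aux
variable {N : ℕ}

lemma aux_wd_support (M : Fin N → Fin N → ℝ) : ∀ {n : ℕ} (t : BT (Fin N) n) (i : Fin N),
    i ∉ t.leaves → wd M t i = 0 := by
  intro n t
  induction t with
  | leaf a =>
      intro i hi
      simp only [BT.leaves, List.mem_singleton] at hi
      simp [wd, hi]
  | node L R ihL ihR =>
      intro i hi
      simp only [BT.leaves, List.mem_append] at hi
      push_neg at hi
      simp [wd, ihL i hi.1, ihR i hi.2]

lemma aux_nodup_node {n : ℕ} {L R : BT (Fin N) n} (h : (BT.node L R).leaves.Nodup) :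
    L.leaves.Nodup ∧ R.leaves.Nodup ∧ ∀ i, i ∈ L.leaves → i ∉ R.leaves := by
  simp only [BT.leaves, List.nodup_append] at h
  exact ⟨h.1, h.2.1, fun i hi hiR => h.2.2 i hi i hiR rfl⟩

lemma aux_wd_nonneg (M : Fin N → Fin N → ℝ) (hM : ∀ i j : Fin N, i ≠ j → 0 ≤ M i j) :
    ∀ {n : ℕ} (t : BT (Fin N) n), t.leaves.Nodup → ∀ i, 0 ≤ wd M t i := by
  intro n t
  induction t with
  | leaf a =>
      intro _ i
      simp only [wd]
      split <;> norm_num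
  | node L R ihL ihR =>
      intro hnd i
      obtain ⟨h1, h2, hdisj⟩ := aux_nodup_node hnd
      have term : ∀ {d : ℕ} (A B : BT (Fin N) d), (∀ i, 0 ≤ wd M A i) → (∀ i, 0 ≤ wd M B i) →
          (∀ j, j ∈ A.leaves → j ∉ B.leaves) →
          0 ≤ wd M A i * ∑ j, wd M B j * M i j := by
        intro d A B hA hB hd
        by_cases h0 : wd M A i = 0
        · rw [h0, zero_mul]
        · have hiA : i ∈ A.leaves := by
            by_contra h
            exact h0 (aux_wd_support M A i h)
          have hiB : wd M B i = 0 := aux_wd_support M B i (hd i hiA)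
          apply mul_nonneg (hA i)
          apply Finset.sum_nonneg
          intro j _
          by_cases hji : j = i
          · rw [hji, hiB, zero_mul]
          · exact mul_nonneg (hB j) (hM i j (fun e => hji e.symm))
      simp only [wd]
      exact add_nonneg (term L R (ihL h1) (ihR h2) hdisj)
        (term R L (ihR h2) (ihL h1) (fun j hj hjL => hdisj j hjL hj))

lemma aux_wd_total (M : Fin N → Fin N → ℝ) (hM : ∀ i j : Fin N, i ≠ j → M i j + M j i = 1) :
    ∀ {n : ℕ} (t : BT (Fin N) n), t.leaves.Nodup → ∑ i, wd M t i = 1 := by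
  intro n t
  induction t with
  | leaf a => intro _; simp [wd]
  | node L R ihL ihR =>
      intro hnd
      obtain ⟨h1, h2, hdisj⟩ := aux_nodup_node hnd
      have hprod : ∀ i : Fin N, wd M L i * wd M R i = 0 := by
        intro i
        by_cases h : i ∈ L.leaves
        · rw [aux_wd_support M R i (hdisj i h), mul_zero]
        · rw [aux_wd_support M L i h, zero_mul]
      simp only [wd]
      rw [Finset.sum_add_distrib]
      have e1 : (∑ i, wd M L i * ∑ j, wd M R j * M i j)
          = ∑ i, ∑ j, wd M L i * wd M R j * M i j := by
        refine Finset.sum_congr rfl fun i _ => ?_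
        rw [Finset.mul_sum]
        exact Finset.sum_congr rfl fun j _ => by ring
      have e2 : (∑ i, wd M R i * ∑ j, wd M L j * M i j)
          = ∑ i, ∑ j, wd M L i * wd M R j * M j i := by
        calc (∑ i, wd M R i * ∑ j, wd M L j * M i j)
            = ∑ i, ∑ j, wd M L j * wd M R i * M i j := by
              refine Finset.sum_congr rfl fun i _ => ?_
              rw [Finset.mul_sum]
              exact Finset.sum_congr rfl fun j _ => by ring
          _ = ∑ j, ∑ i, wd M L j * wd M R i * M i j := Finset.sum_comm
          _ = ∑ i, ∑ j, wd M L i * wd M R j * M j i := rfl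
      rw [e1, e2, ← Finset.sum_add_distrib]
      have e3 : (∑ i, ((∑ j, wd M L i * wd M R j * M i j) + ∑ j, wd M L i * wd M R j * M j i))
          = ∑ i, ∑ j, wd M L i * wd M R j := by
        refine Finset.sum_congr rfl fun i _ => ?_
        rw [← Finset.sum_add_distrib]
        refine Finset.sum_congr rfl fun j _ => ?_
        by_cases hij : i = j
        · subst hij
          linear_combination (2 * M i i - 1) * hprod i
        · rw [← mul_add, hM i j hij, mul_one]
      rw [e3, ← Finset.sum_mul_sum, ihL h1, ihR h2, one_mul]

lemma aux_pointmass_zero {w : Fin N → ℝ} (hw0 : ∀ j, 0 ≤ w j) (hw1 : ∑ j, w j = 1)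
    {j₀ : Fin N} (h : w j₀ = 1) {j : Fin N} (hj : j ≠ j₀) : w j = 0 := by
  by_contra h0
  have hpos : 0 < w j := lt_of_le_of_ne (hw0 j) (Ne.symm h0)
  have hle : w j₀ + w j ≤ 1 := by
    rw [← hw1]
    have hs := Finset.sum_le_sum_of_subset_of_nonneg (Finset.subset_univ ({j₀, j} : Finset (Fin N)))
      (fun k _ _ => hw0 k)
    rwa [Finset.sum_pair (Ne.symm hj)] at hs
  rw [h] at hle
  linarith

lemma aux_sum_pointmass {w : Fin N → ℝ} (hw0 : ∀ j, 0 ≤ w j) (hw1 : ∑ j, w j = 1)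
    {j₀ : Fin N} (h : w j₀ = 1) (v : Fin N → ℝ) : ∑ j, w j * v j = v j₀ := by
  rw [Finset.sum_eq_single j₀]
  · rw [h, one_mul]
  · intro b _ hb
    rw [aux_pointmass_zero hw0 hw1 h hb, zero_mul]
  · intro hmem
    exact absurd (Finset.mem_univ j₀) hmem

lemma aux_wd_hero (M : Fin N → Fin N → ℝ) (hM0 : ∀ i j : Fin N, i ≠ j → 0 ≤ M i j)
    (hM1 : ∀ i j : Fin N, i ≠ j → M i j + M j i = 1) {c : ℝ} (hc : 0 ≤ c) :
    ∀ {n : ℕ} (t : BT (Fin N) n), t.leaves.Nodup → ∀ z : Fin N, z ∈ t.leaves →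
      (∀ j ∈ t.leaves, j ≠ z → c ≤ M z j) → c ^ n ≤ wd M t z := by
  intro n t
  induction t with
  | leaf a =>
      intro _ z hz _
      simp only [BT.leaves, List.mem_singleton] at hz
      subst hz
      simp [wd]
  | node L R ihL ihR =>
      intro hnd z hz hbeat
      obtain ⟨h1, h2, hdisj⟩ := aux_nodup_node hnd
      simp only [BT.leaves, List.mem_append] at hz
      have hbL : ∀ j ∈ L.leaves, j ≠ z → c ≤ M z j := fun j hj hne =>
        hbeat j (by simp only [BT.leaves, List.mem_append]; exact Or.inl hj) hne
      have hbR : ∀ j ∈ R.leaves, j ≠ z → c ≤ M z j := fun j hj hne =>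
        hbeat j (by simp only [BT.leaves, List.mem_append]; exact Or.inr hj) hne
      have main : ∀ {d : ℕ} (A B : BT (Fin N) d), A.leaves.Nodup → B.leaves.Nodup →
          (∀ j, j ∈ A.leaves → j ∉ B.leaves) → z ∈ A.leaves →
          (∀ j ∈ B.leaves, j ≠ z → c ≤ M z j) →
          (c ^ d ≤ wd M A z) →
          c ^ (d + 1) ≤ wd M A z * (∑ j, wd M B j * M z j) + wd M B z * (∑ j, wd M A j * M z j) := by
        intro d A B hA hB hd hzA hbB hIH
        have hzB : wd M B z = 0 := aux_wd_support M B z (hd z hzA)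
        rw [hzB, zero_mul, add_zero]
        have hBnn := aux_wd_nonneg M hM0 B hB
        have hsum : c ≤ ∑ j, wd M B j * M z j := by
          have hss : (∑ j, wd M B j * c) ≤ ∑ j, wd M B j * M z j := by
            apply Finset.sum_le_sum
            intro j _
            by_cases hj : wd M B j = 0
            · rw [hj, zero_mul, zero_mul]
            · have hjB : j ∈ B.leaves := by
                by_contra h
                exact hj (aux_wd_support M B j h)
              have hjz : j ≠ z := fun e => hd z hzA (e ▸ hjB)
              exact mul_le_mul_of_nonneg_left (hbB j hjB hjz) (hBnn j)
          rwa [← Finset.sum_mul, aux_wd_total M hM1 B hB, one_mul] at hss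
        calc c ^ (d + 1) = c ^ d * c := pow_succ c d
          _ ≤ wd M A z * ∑ j, wd M B j * M z j :=
              mul_le_mul hIH hsum hc (le_trans (pow_nonneg hc _) hIH)
      rcases hz with hzL | hzR
      · simp only [wd]
        exact main L R h1 h2 hdisj hzL
          (fun j hj hne => hbR j hj hne)
          (ihL h1 z hzL hbL)
      · simp only [wd]
        rw [add_comm (wd M L z * ∑ j, wd M R j * M z j)]
        exact main R L h2 h1 (fun j hjR hjL => hdisj j hjL hjR) hzR
          (fun j hj hne => hbL j hj hne)
          (ihR h2 z hzR hbR)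



lemma aux_key_sum (M : Fin N → Fin N → ℝ) (A B : Fin N → ℝ)
    (hcomp : ∀ i j : Fin N, A i ≠ 0 → B j ≠ 0 → M i j + M j i = 1)
    (hzero : ∀ i j : Fin N, ((A i ≠ 0 ∧ B j ≠ 0) ∨ (B i ≠ 0 ∧ A j ≠ 0)) →
      (i : ℕ) % 2 = 0 → (j : ℕ) % 2 ≠ 0 → M i j = 0) :
    (∑ i : Fin N, if (i : ℕ) % 2 = 0 then A i * (∑ j, B j * M i j) + B i * (∑ j, A j * M i j) else 0)
      = (∑ i : Fin N, if (i : ℕ) % 2 = 0 then A i else 0)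
        * (∑ i : Fin N, if (i : ℕ) % 2 = 0 then B i else 0) := by
  classical
  set E := Finset.univ.filter (fun i : Fin N => (i : ℕ) % 2 = 0) with hE
  have hmemE : ∀ i : Fin N, i ∈ E ↔ (i : ℕ) % 2 = 0 := by intro i; simp [hE]
  have conv : ∀ w : Fin N → ℝ, (∑ i : Fin N, if (i : ℕ) % 2 = 0 then w i else 0) = ∑ i ∈ E, w i := by
    intro w; rw [Finset.sum_filter]
  rw [conv, conv, conv]
  have step1 : (∑ i ∈ E, (A i * (∑ j, B j * M i j) + B i * (∑ j, A j * M i j)))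
      = ∑ i ∈ E, (A i * (∑ j ∈ E, B j * M i j) + B i * (∑ j ∈ E, A j * M i j)) := by
    refine Finset.sum_congr rfl fun i hi => ?_
    have hieven : (i : ℕ) % 2 = 0 := (hmemE i).mp hi
    congr 1
    · by_cases hAi : A i = 0
      · rw [hAi, zero_mul, zero_mul]
      · congr 1
        refine (Finset.sum_subset (Finset.subset_univ E) (fun j _ hj => ?_)).symm
        have hjodd : (j : ℕ) % 2 ≠ 0 := fun h => hj ((hmemE j).mpr h)
        by_cases hBj : B j = 0
        · rw [hBj, zero_mul]
        · rw [hzero i j (Or.inl ⟨hAi, hBj⟩) hieven hjodd, mul_zero]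
    · by_cases hBi : B i = 0
      · rw [hBi, zero_mul, zero_mul]
      · congr 1
        refine (Finset.sum_subset (Finset.subset_univ E) (fun j _ hj => ?_)).symm
        have hjodd : (j : ℕ) % 2 ≠ 0 := fun h => hj ((hmemE j).mpr h)
        by_cases hAj : A j = 0
        · rw [hAj, zero_mul]
        · rw [hzero i j (Or.inr ⟨hBi, hAj⟩) hieven hjodd, mul_zero]
  rw [step1]
  have expand : (∑ i ∈ E, (A i * (∑ j ∈ E, B j * M i j) + B i * (∑ j ∈ E, A j * M i j)))
      = (∑ i ∈ E, ∑ j ∈ E, A i * B j * M i j) + ∑ i ∈ E, ∑ j ∈ E, B i * A j * M i j := by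
    rw [← Finset.sum_add_distrib]
    refine Finset.sum_congr rfl fun i _ => ?_
    rw [Finset.mul_sum, Finset.mul_sum]
    congr 1 <;> exact Finset.sum_congr rfl fun j _ => by ring
  rw [expand]
  have swap : (∑ i ∈ E, ∑ j ∈ E, B i * A j * M i j) = ∑ i ∈ E, ∑ j ∈ E, A i * B j * M j i := by
    rw [Finset.sum_comm]
    exact Finset.sum_congr rfl fun i _ => Finset.sum_congr rfl fun j _ => by ring
  rw [swap, ← Finset.sum_add_distrib, Finset.sum_mul_sum]
  refine Finset.sum_congr rfl fun i _ => ?_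
  rw [← Finset.sum_add_distrib]
  refine Finset.sum_congr rfl fun j _ => ?_
  by_cases h : A i = 0
  · rw [h]; ring
  by_cases h2 : B j = 0
  · rw [h2]; ring
  have hc := hcomp i j h h2
  linear_combination A i * B j * hc

end Aux

noncomputable def Pm' (N : ℕ) (ε : ℝ) : Fin N → Fin N → ℝ := fun i j =>
  if (i : ℕ) % 2 = (j : ℕ) % 2 then (if (i : ℕ) < (j : ℕ) then 1 else 0)
  else if (i : ℕ) % 2 = 0 then (if (j : ℕ) = (i : ℕ) + 1 then 1 - ε else 0)
  else (if (i : ℕ) = (j : ℕ) + 1 then ε else 1)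

noncomputable def Pm (N : ℕ) : Fin N → Fin N → ℝ := Pm' N 0

section Aux2
variable {N : ℕ}

lemma Pm'_same_lt (ε : ℝ) {i j : Fin N} (h : (i : ℕ) % 2 = (j : ℕ) % 2)
    (hlt : (i : ℕ) < (j : ℕ)) : Pm' N ε i j = 1 := by
  unfold Pm'; rw [if_pos h, if_pos hlt]

lemma Pm'_pair (ε : ℝ) {i j : Fin N} (hi : (i : ℕ) % 2 = 0) (hj : (j : ℕ) = (i : ℕ) + 1) :
    Pm' N ε i j = 1 - ε := by
  unfold Pm'; rw [if_neg (by omega), if_pos hi, if_pos hj]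

lemma Pm'_even_odd (ε : ℝ) {i j : Fin N} (hi : (i : ℕ) % 2 = 0) (hj : (j : ℕ) % 2 ≠ 0)
    (hne : (j : ℕ) ≠ (i : ℕ) + 1) : Pm' N ε i j = 0 := by
  unfold Pm'; rw [if_neg (by omega), if_pos hi, if_neg hne]

lemma Pm_same_lt {i j : Fin N} (h : (i : ℕ) % 2 = (j : ℕ) % 2)
    (hlt : (i : ℕ) < (j : ℕ)) : Pm N i j = 1 := Pm'_same_lt 0 h hlt

lemma Pm_pair {i j : Fin N} (hi : (i : ℕ) % 2 = 0) (hj : (j : ℕ) = (i : ℕ) + 1) :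
    Pm N i j = 1 := by
  show Pm' N 0 i j = 1
  rw [Pm'_pair 0 hi hj]; norm_num

lemma Pm'_comp {ε : ℝ} (hε0 : 0 ≤ ε) (hε1 : ε ≤ 1) :
    ∀ i j : Fin N, i ≠ j → 0 ≤ Pm' N ε i j ∧ Pm' N ε i j ≤ 1 ∧ Pm' N ε i j + Pm' N ε j i = 1 := by
  intro i j hij
  have hval : (i : ℕ) ≠ (j : ℕ) := fun h => hij (Fin.ext h)
  unfold Pm'
  refine ⟨?_, ?_, ?_⟩ <;> split_ifs <;> first | linarith | (exfalso; omega)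

lemma Pm_comp : ∀ i j : Fin N, i ≠ j → 0 ≤ Pm N i j ∧ Pm N i j ≤ 1 ∧ Pm N i j + Pm N j i = 1 :=
  Pm'_comp le_rfl zero_le_one

lemma Pm_det : ∀ i j : Fin N, i ≠ j → Pm N i j = 0 ∨ Pm N i j = 1 := by
  intro i j hij
  unfold Pm Pm'
  split_ifs <;> norm_num

lemma Pm'_pert {ε : ℝ} (hε0 : 0 ≤ ε) :
    ∀ i j : Fin N, i ≠ j → |Pm' N ε i j - Pm N i j| ≤ ε := by
  intro i j _
  unfold Pm Pm'
  split_ifs <;> (rw [abs_le]; constructor <;> linarith)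

lemma aux_leaves_map {α β : Type} (f : α → β) : ∀ {n : ℕ} (t : BT α n),
    (t.map f).leaves = t.leaves.map f := by
  intro n t
  induction t with
  | leaf a => rfl
  | node L R ihL ihR => simp [BT.map, BT.leaves, ihL, ihR]

lemma aux_leaves_ordTree : ∀ (k s : ℕ), (ordTree k s).leaves = List.range' s (2 ^ k) := by
  intro k
  induction k with
  | zero => intro s; rfl
  | succ k ih =>
      intro s
      show (ordTree k s).leaves ++ (ordTree k (s + 2 ^ k)).leaves = _
      rw [ih, ih]
      have h := List.range'_append (s := s) (m := 2 ^ k) (n := 2 ^ k) (step := 1)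
      rw [one_mul] at h
      rw [h]
      congr 1
      rw [pow_succ]
      ring

def fN (n : ℕ) : ℕ → Fin (2 ^ n) := fun k => ⟨k % 2 ^ n, Nat.mod_lt _ (by positivity)⟩

lemma fN_val {n x : ℕ} (h : x < 2 ^ n) : ((fN n x : Fin (2 ^ n)) : ℕ) = x := Nat.mod_eq_of_lt h

lemma block_leaves (n k s : ℕ) :
    ((ordTree k s).map (fN n)).leaves = (List.range' s (2 ^ k)).map (fN n) := by
  rw [aux_leaves_map, aux_leaves_ordTree]

lemma mem_block {n k s : ℕ} (hle : s + 2 ^ k ≤ 2 ^ n) {i : Fin (2 ^ n)} :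
    i ∈ ((ordTree k s).map (fN n)).leaves ↔ s ≤ (i : ℕ) ∧ (i : ℕ) < s + 2 ^ k := by
  rw [block_leaves, List.mem_map]
  constructor
  · rintro ⟨x, hx, rfl⟩
    rw [List.mem_range'_1] at hx
    rw [fN_val (lt_of_lt_of_le hx.2 hle)]
    exact hx
  · rintro ⟨ha, hb⟩
    refine ⟨(i : ℕ), ?_, ?_⟩
    · rw [List.mem_range'_1]; exact ⟨ha, hb⟩
    · apply Fin.ext; rw [fN_val i.isLt]

lemma nodup_block {n k s : ℕ} (hle : s + 2 ^ k ≤ 2 ^ n) :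
    ((ordTree k s).map (fN n)).leaves.Nodup := by
  rw [block_leaves]
  refine List.Nodup.map_on ?_ (List.nodup_range' (s := s) (n := 2 ^ k) 1 one_pos)
  intro x hx y hy hxy
  rw [List.mem_range'_1] at hx hy
  have hx2 : x < 2 ^ n := lt_of_lt_of_le hx.2 hle
  have hy2 : y < 2 ^ n := lt_of_lt_of_le hy.2 hle
  have := congrArg Fin.val hxy
  rwa [fN_val hx2, fN_val hy2] at this

end Aux2

lemma block_winner (n : ℕ) : ∀ k s : ℕ, (s % 2 = 0 ∨ k = 0) → s + 2 ^ k ≤ 2 ^ n →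
    wd (Pm (2 ^ n)) ((ordTree k s).map (fN n)) (fN n s) = 1 := by
  intro k
  induction k with
  | zero =>
      intro s _ _
      show wd _ (BT.leaf (fN n s)) (fN n s) = 1
      simp [wd]
  | succ k ih =>
      intro s hpar hle
      have hs : s % 2 = 0 := by
        rcases hpar with h | h
        · exact h
        · omega
      have hpow : 0 < 2 ^ k := by positivity
      have hsplit : 2 ^ (k + 1) = 2 ^ k + 2 ^ k := by rw [pow_succ]; ring
      have hle1 : s + 2 ^ k ≤ 2 ^ n := by omega
      have hle2 : (s + 2 ^ k) + 2 ^ k ≤ 2 ^ n := by omega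
      have hslt : s < 2 ^ n := by omega
      have hblt : s + 2 ^ k < 2 ^ n := by omega
      have hA : ((fN n s : Fin (2 ^ n)) : ℕ) = s := fN_val hslt
      have hB : ((fN n (s + 2 ^ k) : Fin (2 ^ n)) : ℕ) = s + 2 ^ k := fN_val hblt
      have hpar2 : (s + 2 ^ k) % 2 = 0 ∨ k = 0 := by
        rcases Nat.eq_zero_or_pos k with h | h
        · exact Or.inr h
        · left
          obtain ⟨t, ht⟩ : 2 ∣ 2 ^ k := dvd_pow_self 2 (by omega)
          omega
      have hwL := ih s (Or.inl hs) hle1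
      have hwR := ih (s + 2 ^ k) hpar2 hle2
      have hM0 : ∀ i j : Fin (2 ^ n), i ≠ j → 0 ≤ Pm (2 ^ n) i j :=
        fun i j h => (Pm_comp i j h).1
      have hM1 : ∀ i j : Fin (2 ^ n), i ≠ j → Pm (2 ^ n) i j + Pm (2 ^ n) j i = 1 :=
        fun i j h => (Pm_comp i j h).2.2
      have hndR := nodup_block (n := n) (k := k) (s := s + 2 ^ k) hle2
      have hRnn := aux_wd_nonneg _ hM0 _ hndR
      have hRtot := aux_wd_total _ hM1 _ hndR
      have hnotin : (fN n s : Fin (2 ^ n)) ∉ ((ordTree k (s + 2 ^ k)).map (fN n)).leaves := by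
        rw [mem_block hle2, hA]
        omega
      have hRz : wd (Pm (2 ^ n)) ((ordTree k (s + 2 ^ k)).map (fN n)) (fN n s) = 0 :=
        aux_wd_support _ _ _ hnotin
      have hPab : Pm (2 ^ n) (fN n s) (fN n (s + 2 ^ k)) = 1 := by
        rcases Nat.eq_zero_or_pos k with h | h
        · subst h
          exact Pm_pair (by rw [hA]; exact hs) (by rw [hA, hB]; norm_num)
        · have hk2 : 2 ^ k % 2 = 0 := by
            obtain ⟨t, ht⟩ : 2 ∣ 2 ^ k := dvd_pow_self 2 (by omega)
            omega
          exact Pm_same_lt (by rw [hA, hB]; omega) (by rw [hA, hB]; omega)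
      have htree : (ordTree (k + 1) s).map (fN n)
          = BT.node ((ordTree k s).map (fN n)) ((ordTree k (s + 2 ^ k)).map (fN n)) := rfl
      rw [htree]
      simp only [wd]
      rw [hRz, zero_mul, add_zero, hwL, one_mul,
        aux_sum_pointmass hRnn hRtot hwR (fun j => Pm (2 ^ n) (fN n s) j)]
      exact hPab

lemma even_mass (n : ℕ) {ε : ℝ} (hε0 : 0 ≤ ε) (hε1 : ε ≤ 1) :
    ∀ k s : ℕ, s % 2 = 0 → s + 2 ^ (k + 1) ≤ 2 ^ n →
    (∑ i : Fin (2 ^ n), if (i : ℕ) % 2 = 0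
        then wd (Pm' (2 ^ n) ε) ((ordTree (k + 1) s).map (fN n)) i else 0)
      = (1 - ε) ^ 2 ^ k := by
  intro k
  induction k with
  | zero =>
      intro s hs hle
      have h2 : (2 : ℕ) ^ (0 + 1) = 2 := by norm_num
      have hs1 : s + 1 < 2 ^ n := by omega
      have hslt : s < 2 ^ n := by omega
      set a : Fin (2 ^ n) := fN n s with hadef
      set b : Fin (2 ^ n) := fN n (s + 1) with hbdef
      have ha : (a : ℕ) = s := fN_val hslt
      have hb : (b : ℕ) = s + 1 := fN_val hs1
      have hab : a ≠ b := by
        intro h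
        have := congrArg Fin.val h
        omega
      have htree : (ordTree (0 + 1) s).map (fN n) = BT.node (BT.leaf a) (BT.leaf b) := by
        simp only [ordTree, BT.map, pow_zero, hadef, hbdef]
      rw [htree]
      have hwd : ∀ i : Fin (2 ^ n), wd (Pm' (2 ^ n) ε) (BT.node (BT.leaf a) (BT.leaf b)) i
          = if i = a then Pm' (2 ^ n) ε a b else if i = b then Pm' (2 ^ n) ε b a else 0 := by
        intro i
        simp only [wd]
        have h1 : (∑ j, (if j = b then (1 : ℝ) else 0) * Pm' (2 ^ n) ε i j)
            = Pm' (2 ^ n) ε i b := by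
          rw [Finset.sum_eq_single b]
          · rw [if_pos rfl, one_mul]
          · intro c _ hc; rw [if_neg hc, zero_mul]
          · intro h; exact absurd (Finset.mem_univ b) h
        have h2' : (∑ j, (if j = a then (1 : ℝ) else 0) * Pm' (2 ^ n) ε i j)
            = Pm' (2 ^ n) ε i a := by
          rw [Finset.sum_eq_single a]
          · rw [if_pos rfl, one_mul]
          · intro c _ hc; rw [if_neg hc, zero_mul]
          · intro h; exact absurd (Finset.mem_univ a) h
        rw [h1, h2']
        by_cases hia : i = a
        · subst hia
          rw [if_pos rfl, if_pos rfl, if_neg hab, one_mul, zero_mul, add_zero]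
        · rw [if_neg hia, if_neg hia, zero_mul, zero_add]
          by_cases hib : i = b
          · subst hib
            rw [if_pos rfl, if_pos rfl, one_mul]
          · rw [if_neg hib, if_neg hib, zero_mul]
      have hsummand : ∀ i : Fin (2 ^ n),
          (if (i : ℕ) % 2 = 0 then wd (Pm' (2 ^ n) ε) (BT.node (BT.leaf a) (BT.leaf b)) i else 0)
            = if i = a then Pm' (2 ^ n) ε a b else 0 := by
        intro i
        rw [hwd i]
        by_cases hia : i = a
        · subst hia
          rw [if_pos (by omega), if_pos rfl, if_pos rfl]
        · rw [if_neg hia]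
          by_cases hib : i = b
          · subst hib
            rw [if_neg (by omega), if_neg hia]
          · rw [if_neg hia]
            split_ifs <;> rfl
      have hpair : Pm' (2 ^ n) ε a b = 1 - ε := Pm'_pair ε (by omega) (by omega)
      rw [Finset.sum_congr rfl (fun i _ => hsummand i),
        Finset.sum_ite_eq' Finset.univ a (fun _ => Pm' (2 ^ n) ε a b),
        if_pos (Finset.mem_univ a), hpair, pow_zero, pow_one]
  | succ k ih =>
      intro s hs hle
      have hsplit : 2 ^ (k + 1 + 1) = 2 ^ (k + 1) + 2 ^ (k + 1) := by rw [pow_succ]; ring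
      rw [hsplit] at hle
      have hc1 : 1 ≤ 2 ^ k := Nat.one_le_two_pow
      have hle1 : s + 2 ^ (k + 1) ≤ 2 ^ n := by omega
      have hle2 : (s + 2 ^ (k + 1)) + 2 ^ (k + 1) ≤ 2 ^ n := by omega
      have hs2 : (s + 2 ^ (k + 1)) % 2 = 0 := by
        obtain ⟨t, ht⟩ : 2 ∣ 2 ^ (k + 1) := dvd_pow_self 2 (Nat.succ_ne_zero k)
        omega
      have hIL := ih s hs hle1
      have hIR := ih (s + 2 ^ (k + 1)) hs2 hle2
      set M := Pm' (2 ^ n) ε with hMdef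
      set L := (ordTree (k + 1) s).map (fN n) with hLdef
      set R := (ordTree (k + 1) (s + 2 ^ (k + 1))).map (fN n) with hRdef
      have hAsupp : ∀ i : Fin (2 ^ n), wd M L i ≠ 0 → s ≤ (i : ℕ) ∧ (i : ℕ) < s + 2 ^ (k + 1) := by
        intro i hi
        rw [← mem_block hle1]
        by_contra h
        exact hi (aux_wd_support M L i h)
      have hBsupp : ∀ i : Fin (2 ^ n), wd M R i ≠ 0 →
          s + 2 ^ (k + 1) ≤ (i : ℕ) ∧ (i : ℕ) < (s + 2 ^ (k + 1)) + 2 ^ (k + 1) := by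
        intro i hi
        rw [← mem_block hle2]
        by_contra h
        exact hi (aux_wd_support M R i h)
      have hM1 : ∀ i j : Fin (2 ^ n), i ≠ j → M i j + M j i = 1 :=
        fun i j h => (Pm'_comp hε0 hε1 i j h).2.2
      have hcomp : ∀ i j : Fin (2 ^ n), wd M L i ≠ 0 → wd M R j ≠ 0 → M i j + M j i = 1 := by
        intro i j hA hB
        have h1 := hAsupp i hA
        have h2 := hBsupp j hB
        exact hM1 i j (by intro e; rw [e] at h1; omega)
      have hzero : ∀ i j : Fin (2 ^ n),
          ((wd M L i ≠ 0 ∧ wd M R j ≠ 0) ∨ (wd M R i ≠ 0 ∧ wd M L j ≠ 0)) →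
          (i : ℕ) % 2 = 0 → (j : ℕ) % 2 ≠ 0 → M i j = 0 := by
        intro i j hor hi hj
        rcases hor with ⟨hA, hB⟩ | ⟨hB, hA⟩
        · have h1 := hAsupp i hA
          have h2 := hBsupp j hB
          exact Pm'_even_odd ε hi hj (by omega)
        · have h1 := hBsupp i hB
          have h2 := hAsupp j hA
          exact Pm'_even_odd ε hi hj (by omega)
      have htree : (ordTree (k + 1 + 1) s).map (fN n) = BT.node L R := rfl
      have hnode : ∀ i : Fin (2 ^ n), wd M (BT.node L R) i
          = wd M L i * (∑ j, wd M R j * M i j) + wd M R i * (∑ j, wd M L j * M i j) :=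
        fun i => rfl
      rw [htree]
      simp only [hnode]
      rw [aux_key_sum M (wd M L) (wd M R) hcomp hzero, hIL, hIR, ← pow_add]
      congr 1
      rw [pow_succ]
      ring

def gN (m : ℕ) : ℕ → Fin (2 ^ (m + 1)) := fun k =>
  ⟨(if k < 2 ^ m then 2 * k else 2 * (k - 2 ^ m) + 1) % 2 ^ (m + 1),
    Nat.mod_lt _ (by positivity)⟩

lemma two_pow_succ (m : ℕ) : 2 ^ (m + 1) = 2 ^ m + 2 ^ m := by rw [pow_succ]; ring

lemma gN_val_lo {m x : ℕ} (h : x < 2 ^ m) : ((gN m x : Fin (2 ^ (m + 1))) : ℕ) = 2 * x := by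
  have h2 := two_pow_succ m
  show (if x < 2 ^ m then 2 * x else 2 * (x - 2 ^ m) + 1) % 2 ^ (m + 1) = 2 * x
  rw [if_pos h, Nat.mod_eq_of_lt (by omega)]

lemma gN_val_hi {m x : ℕ} (h1 : 2 ^ m ≤ x) (h2 : x < 2 ^ (m + 1)) :
    ((gN m x : Fin (2 ^ (m + 1))) : ℕ) = 2 * (x - 2 ^ m) + 1 := by
  have h2' := two_pow_succ m
  show (if x < 2 ^ m then 2 * x else 2 * (x - 2 ^ m) + 1) % 2 ^ (m + 1) = 2 * (x - 2 ^ m) + 1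
  rw [if_neg (by omega), Nat.mod_eq_of_lt (by omega)]

lemma sigma'_lower (m : ℕ) (M : Fin (2 ^ (m + 1)) → Fin (2 ^ (m + 1)) → ℝ)
    (hM0 : ∀ i j : Fin (2 ^ (m + 1)), i ≠ j → 0 ≤ M i j)
    (hM1 : ∀ i j : Fin (2 ^ (m + 1)), i ≠ j → M i j + M j i = 1)
    (c : ℝ) (hc : 0 ≤ c)
    (hM : ∀ i j : Fin (2 ^ (m + 1)), i ≠ j → Pm (2 ^ (m + 1)) i j = 1 → c ≤ M i j) :
    c ^ (2 * m + 1) ≤ wd M ((ordTree (m + 1) 0).map (gN m)) ⟨0, by positivity⟩ := by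
  have h2 := two_pow_succ m
  have hpow : 0 < 2 ^ m := by positivity
  set z0 : Fin (2 ^ (m + 1)) := ⟨0, by positivity⟩ with hz0def
  set z1 : Fin (2 ^ (m + 1)) := ⟨1, by omega⟩ with hz1def
  have hz01 : z0 ≠ z1 := by
    intro h
    simpa using congrArg Fin.val h
  set TE := (ordTree m 0).map (gN m) with hTEdef
  set TO := (ordTree m (0 + 2 ^ m)).map (gN m) with hTOdef
  have hTEl : TE.leaves = (List.range' 0 (2 ^ m)).map (gN m) := by
    rw [hTEdef, aux_leaves_map, aux_leaves_ordTree]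
  have hTOl : TO.leaves = (List.range' (0 + 2 ^ m) (2 ^ m)).map (gN m) := by
    rw [hTOdef, aux_leaves_map, aux_leaves_ordTree]
  have hTEmem : ∀ j : Fin (2 ^ (m + 1)), j ∈ TE.leaves → (j : ℕ) % 2 = 0 := by
    intro j hj
    rw [hTEl, List.mem_map] at hj
    obtain ⟨x, hx, rfl⟩ := hj
    rw [List.mem_range'_1] at hx
    rw [gN_val_lo (by omega)]
    omega
  have hTOmem : ∀ j : Fin (2 ^ (m + 1)), j ∈ TO.leaves → (j : ℕ) % 2 = 1 := by
    intro j hj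
    rw [hTOl, List.mem_map] at hj
    obtain ⟨x, hx, rfl⟩ := hj
    rw [List.mem_range'_1] at hx
    rw [gN_val_hi (by omega) (by omega)]
    omega
  have hndTE : TE.leaves.Nodup := by
    rw [hTEl]
    refine List.Nodup.map_on ?_ (List.nodup_range' (s := 0) (n := 2 ^ m) 1 one_pos)
    intro x hx y hy hxy
    rw [List.mem_range'_1] at hx hy
    have := congrArg Fin.val hxy
    rw [gN_val_lo (by omega), gN_val_lo (by omega)] at this
    omega
  have hndTO : TO.leaves.Nodup := by
    rw [hTOl]
    refine List.Nodup.map_on ?_ (List.nodup_range' (s := 0 + 2 ^ m) (n := 2 ^ m) 1 one_pos)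
    intro x hx y hy hxy
    rw [List.mem_range'_1] at hx hy
    have := congrArg Fin.val hxy
    rw [gN_val_hi (by omega) (by omega), gN_val_hi (by omega) (by omega)] at this
    omega
  have hz0val : (z0 : ℕ) = 0 := rfl
  have hz1val : (z1 : ℕ) = 1 := rfl
  have hz0mem : z0 ∈ TE.leaves := by
    rw [hTEl, List.mem_map]
    refine ⟨0, ?_, ?_⟩
    · rw [List.mem_range'_1]; omega
    · apply Fin.ext; rw [gN_val_lo (by omega)]
  have hz1mem : z1 ∈ TO.leaves := by
    rw [hTOl, List.mem_map]
    refine ⟨0 + 2 ^ m, ?_, ?_⟩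
    · rw [List.mem_range'_1]; omega
    · apply Fin.ext; rw [gN_val_hi (by omega) (by omega), hz1val]; omega
  -- hero bound on the even half
  have hE : c ^ m ≤ wd M TE z0 := by
    refine aux_wd_hero M hM0 hM1 hc TE hndTE z0 hz0mem ?_
    intro j hj hne
    have hje := hTEmem j hj
    have hjne : (j : ℕ) ≠ 0 := by
      intro h
      exact hne (Fin.ext (by rw [h, hz0val]))
    refine hM z0 j (fun e => hne e.symm) ?_
    exact Pm_same_lt (by omega) (by omega)
  -- hero bound on the odd half
  have hO : c ^ m ≤ wd M TO z1 := by
    refine aux_wd_hero M hM0 hM1 hc TO hndTO z1 hz1mem ?_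
    intro j hj hne
    have hjo := hTOmem j hj
    have hjne : (j : ℕ) ≠ 1 := by
      intro h
      exact hne (Fin.ext (by rw [h, hz1val]))
    refine hM z1 j (fun e => hne e.symm) ?_
    exact Pm_same_lt (by omega) (by omega)
  -- combine at the root
  have htree : (ordTree (m + 1) 0).map (gN m) = BT.node TE TO := rfl
  have hnode : wd M ((ordTree (m + 1) 0).map (gN m)) z0
      = wd M TE z0 * (∑ j, wd M TO j * M z0 j) + wd M TO z0 * (∑ j, wd M TE j * M z0 j) := by
    rw [htree]
    simp only [wd]
  have hz0notTO : z0 ∉ TO.leaves := by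
    intro h
    have := hTOmem z0 h
    rw [hz0val] at this
    omega
  have hTOz0 : wd M TO z0 = 0 := aux_wd_support M TO z0 hz0notTO
  have hTOnn := aux_wd_nonneg M hM0 TO hndTO
  have hM01 : c ≤ M z0 z1 := by
    refine hM z0 z1 hz01 ?_
    exact Pm_pair (by rw [hz0val]) (by rw [hz1val, hz0val])
  have hsingle : wd M TO z1 * M z0 z1 ≤ ∑ j, wd M TO j * M z0 j := by
    refine Finset.single_le_sum (f := fun j => wd M TO j * M z0 j) ?_ (Finset.mem_univ z1)
    intro j _
    show 0 ≤ wd M TO j * M z0 j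
    by_cases hj : j = z0
    · rw [hj, hTOz0, zero_mul]
    · exact mul_nonneg (hTOnn j) (hM0 z0 j (fun e => hj e.symm))
  have hterm : c ^ m * c ≤ wd M TO z1 * M z0 z1 :=
    mul_le_mul hO hM01 hc (le_trans (pow_nonneg hc m) hO)
  have hsum : c ^ (m + 1) ≤ ∑ j, wd M TO j * M z0 j := by
    rw [pow_succ]
    exact le_trans hterm hsingle
  rw [hnode, hTOz0, zero_mul, add_zero]
  calc c ^ (2 * m + 1) = c ^ m * c ^ (m + 1) := by rw [← pow_add]; congr 1; ring
    _ ≤ wd M TE z0 * ∑ j, wd M TO j * M z0 j :=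
        mul_le_mul hE hsum (pow_nonneg hc (m + 1)) (le_trans (pow_nonneg hc m) hE)

lemma bern_strict {x : ℝ} (hx0 : 0 < x) (hx1 : x < 1) :
    ∀ p : ℕ, 2 ≤ p → 1 - (p : ℝ) * x < (1 - x) ^ p := by
  intro p hp
  induction p with
  | zero => omega
  | succ p ih =>
      rcases Nat.lt_or_ge p 2 with h | h
      · have hp1 : p = 1 := by omega
        subst hp1
        push_cast
        nlinarith [sq_nonneg x]
      · have hih := ih h
        have h1x : 0 < 1 - x := by linarith
        have hstep : 1 - ((p : ℕ) + 1 : ℝ) * x ≤ (1 - (p : ℝ) * x) * (1 - x) := by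
          have hpn : (0 : ℝ) ≤ (p : ℝ) := Nat.cast_nonneg p
          nlinarith [sq_nonneg x, mul_nonneg hpn (sq_nonneg x)]
        calc 1 - ((p + 1 : ℕ) : ℝ) * x ≤ (1 - (p : ℝ) * x) * (1 - x) := by push_cast; push_cast at hstep; linarith
          _ < (1 - x) ^ p * (1 - x) := mul_lt_mul_of_pos_right hih h1x
          _ = (1 - x) ^ (p + 1) := (pow_succ _ _).symm

lemma pow_upper {x : ℝ} (hx0 : 0 ≤ x) (hx1 : x ≤ 1) :
    ∀ p : ℕ, (1 - x) ^ p ≤ 1 - (p : ℝ) * x + ((p : ℝ)) ^ 2 * x ^ 2 := by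
  intro p
  induction p with
  | zero => simp
  | succ p ih =>
      have h1x : 0 ≤ 1 - x := by linarith
      have hpn : (0 : ℝ) ≤ (p : ℝ) := Nat.cast_nonneg p
      calc (1 - x) ^ (p + 1) = (1 - x) ^ p * (1 - x) := pow_succ _ _
        _ ≤ (1 - (p : ℝ) * x + (p : ℝ) ^ 2 * x ^ 2) * (1 - x) := by
            refine mul_le_mul_of_nonneg_right ih h1x
        _ ≤ 1 - ((p + 1 : ℕ) : ℝ) * x + ((p + 1 : ℕ) : ℝ) ^ 2 * x ^ 2 := by
            push_cast
            nlinarith [mul_nonneg (mul_nonneg hpn hpn) (mul_nonneg (mul_nonneg hx0 hx0) hx0),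
              mul_nonneg hpn (mul_nonneg hx0 hx0), mul_nonneg hx0 hx0]

/-- for every `n ≥ 2` there are a deterministic comparison matrix `P`
on `N = 2^n` players and draws `σ, σ'` in which player 1 (index 0) surely wins, such
that `wp_ε(1,P,σ) ≤ 1 - (N/2)ε + ε² Q(ε)` for some polynomial `Q`, while
`wp_ε(1,P,σ') > 1 - (2n-1)ε`, for all `ε ∈ (0,1)`. -/

theorem robust_and_nonrobust_optimal_draws (n : ℕ) (hn : 2 ≤ n) :
    ∃ (P : Fin (2 ^ n) → Fin (2 ^ n) → ℝ) (σ σ' : BT (Fin (2 ^ n)) n),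
      IsCompMatrix P ∧ IsDet P ∧ IsDraw σ ∧ IsDraw σ' ∧
      wd P σ ⟨0, by positivity⟩ = 1 ∧ wd P σ' ⟨0, by positivity⟩ = 1 ∧
      (∃ Q : Polynomial ℝ, ∀ ε ∈ Set.Ioo (0 : ℝ) 1,
        wpe ⟨0, by positivity⟩ P ε σ ≤
          1 - ((2 : ℝ) ^ n / 2) * ε + ε ^ 2 * Q.eval ε) ∧
      (∀ ε ∈ Set.Ioo (0 : ℝ) 1,
        wpe ⟨0, by positivity⟩ P ε σ' > 1 - (2 * (n : ℝ) - 1) * ε) := by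
  obtain ⟨m, rfl⟩ : ∃ m, n = m + 1 := ⟨n - 1, by omega⟩
  have hm : 1 ≤ m := by omega
  have h2 := two_pow_succ m
  have hpow : 0 < 2 ^ m := by positivity
  have hM0 : ∀ i j : Fin (2 ^ (m + 1)), i ≠ j → 0 ≤ Pm (2 ^ (m + 1)) i j :=
    fun i j h => (Pm_comp i j h).1
  have hM1 : ∀ i j : Fin (2 ^ (m + 1)), i ≠ j →
      Pm (2 ^ (m + 1)) i j + Pm (2 ^ (m + 1)) j i = 1 :=
    fun i j h => (Pm_comp i j h).2.2
  have hid : idDraw (m + 1) = (ordTree (m + 1) 0).map (fN (m + 1)) := rfl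
  have hz : fN (m + 1) 0 = (⟨0, by positivity⟩ : Fin (2 ^ (m + 1))) :=
    Fin.ext (Nat.zero_mod _)
  -- nodup for the identity draw
  have hndσ : (idDraw (m + 1)).leaves.Nodup := by
    rw [hid]
    exact nodup_block (n := m + 1) (k := m + 1) (s := 0) (by omega)
  -- leaves description + nodup for σ'
  have hl' : (((ordTree (m + 1) 0).map (gN m))).leaves
      = (List.range' 0 (2 ^ (m + 1))).map (gN m) := by
    rw [aux_leaves_map, aux_leaves_ordTree]
  have hndσ' : (((ordTree (m + 1) 0).map (gN m))).leaves.Nodup := by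
    rw [hl']
    refine List.Nodup.map_on ?_ (List.nodup_range' (s := 0) (n := 2 ^ (m + 1)) 1 one_pos)
    intro x hx y hy hxy
    rw [List.mem_range'_1] at hx hy
    have hv := congrArg Fin.val hxy
    by_cases hx1 : x < 2 ^ m <;> by_cases hy1 : y < 2 ^ m
    · rw [gN_val_lo hx1, gN_val_lo hy1] at hv; omega
    · rw [gN_val_lo hx1, gN_val_hi (by omega) (by omega)] at hv; omega
    · rw [gN_val_hi (by omega) (by omega), gN_val_lo hy1] at hv; omega
    · rw [gN_val_hi (by omega) (by omega), gN_val_hi (by omega) (by omega)] at hv; omega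
  refine ⟨Pm (2 ^ (m + 1)), idDraw (m + 1), (ordTree (m + 1) 0).map (gN m),
    Pm_comp, Pm_det, ?_, ?_, ?_, ?_, ?_, ?_⟩
  · -- IsDraw σ
    intro i
    refine List.count_eq_one_of_mem hndσ ?_
    rw [hid, mem_block (by omega)]
    exact ⟨Nat.zero_le _, by have := i.isLt; omega⟩
  · -- IsDraw σ'
    intro i
    refine List.count_eq_one_of_mem hndσ' ?_
    rw [hl', List.mem_map]
    by_cases hpar : (i : ℕ) % 2 = 0
    · refine ⟨(i : ℕ) / 2, ?_, ?_⟩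
      · rw [List.mem_range'_1]; have := i.isLt; omega
      · apply Fin.ext
        rw [gN_val_lo (by have := i.isLt; omega)]
        omega
    · refine ⟨2 ^ m + (i : ℕ) / 2, ?_, ?_⟩
      · rw [List.mem_range'_1]; have := i.isLt; omega
      · apply Fin.ext
        rw [gN_val_hi (by omega) (by have := i.isLt; omega)]
        omega
  · -- wd P σ 0 = 1
    have hb := block_winner (m + 1) (m + 1) 0 (Or.inl rfl) (by omega)
    rw [hz] at hb
    rw [hid]
    exact hb
  · -- wd P σ' 0 = 1
    have hlow := sigma'_lower m (Pm (2 ^ (m + 1))) hM0 hM1 1 zero_le_one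
      (fun i j hij h1 => le_of_eq h1.symm)
    rw [one_pow] at hlow
    have hnn := aux_wd_nonneg _ hM0 _ hndσ'
    have htot := aux_wd_total _ hM1 _ hndσ'
    have hub : wd (Pm (2 ^ (m + 1))) ((ordTree (m + 1) 0).map (gN m)) ⟨0, by positivity⟩ ≤ 1 := by
      have hs := Finset.single_le_sum
        (f := fun j => wd (Pm (2 ^ (m + 1))) ((ordTree (m + 1) 0).map (gN m)) j)
        (fun j _ => hnn j) (Finset.mem_univ (⟨0, by positivity⟩ : Fin (2 ^ (m + 1))))
      rw [htot] at hs
      exact hs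
    linarith
  · -- the fragile bound
    refine ⟨Polynomial.C (((2 : ℝ) ^ m) ^ 2), ?_⟩
    rintro ε ⟨hε0, hε1⟩
    have hPm'comp : IsCompMatrix (Pm' (2 ^ (m + 1)) ε) :=
      fun i j h => Pm'_comp hε0.le hε1.le i j h
    have hmem : Pm' (2 ^ (m + 1)) ε ∈ perturbs (Pm (2 ^ (m + 1))) ε :=
      ⟨hPm'comp, fun i j h => Pm'_pert hε0.le i j h⟩
    have hbdd : BddBelow ((fun P' => wd P' (idDraw (m + 1)) (⟨0, by positivity⟩ : Fin (2 ^ (m + 1)))) ''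
        perturbs (Pm (2 ^ (m + 1))) ε) := by
      refine ⟨0, ?_⟩
      rintro y ⟨P', hP', rfl⟩
      exact aux_wd_nonneg P' (fun i j h => (hP'.1 i j h).1) _ hndσ _
    have h1 : wpe ⟨0, by positivity⟩ (Pm (2 ^ (m + 1))) ε (idDraw (m + 1))
        ≤ wd (Pm' (2 ^ (m + 1)) ε) (idDraw (m + 1)) ⟨0, by positivity⟩ :=
      csInf_le hbdd ⟨_, hmem, rfl⟩
    have hmass := even_mass (m + 1) hε0.le hε1.le m 0 rfl (by omega)
    have h2' : wd (Pm' (2 ^ (m + 1)) ε) (idDraw (m + 1)) ⟨0, by positivity⟩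
        ≤ (1 - ε) ^ 2 ^ m := by
      have hnn := aux_wd_nonneg (Pm' (2 ^ (m + 1)) ε)
        (fun i j h => (hPm'comp i j h).1) _ hndσ
      have hs := Finset.single_le_sum
        (f := fun i : Fin (2 ^ (m + 1)) =>
          if (i : ℕ) % 2 = 0 then wd (Pm' (2 ^ (m + 1)) ε) (idDraw (m + 1)) i else 0)
        (fun i _ => by
          split_ifs
          · exact hnn i
          · exact le_refl 0)
        (Finset.mem_univ (⟨0, by positivity⟩ : Fin (2 ^ (m + 1))))
      dsimp only at hs
      have hc : ((⟨0, by positivity⟩ : Fin (2 ^ (m + 1))) : ℕ) % 2 = 0 := rfl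
      rw [if_pos hc] at hs
      rw [← hid] at hmass
      exact le_trans hs (le_of_eq hmass)
    have h3 := pow_upper hε0.le hε1.le (2 ^ m)
    have hfin : (1 : ℝ) - ((2 ^ m : ℕ) : ℝ) * ε + ((2 ^ m : ℕ) : ℝ) ^ 2 * ε ^ 2
        = 1 - ((2 : ℝ) ^ (m + 1) / 2) * ε + ε ^ 2 * (Polynomial.C (((2 : ℝ) ^ m) ^ 2)).eval ε := by
      rw [Polynomial.eval_C]
      push_cast
      ring
    calc wpe ⟨0, by positivity⟩ (Pm (2 ^ (m + 1))) ε (idDraw (m + 1))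
        ≤ (1 - ε) ^ 2 ^ m := le_trans h1 h2'
      _ ≤ 1 - ((2 ^ m : ℕ) : ℝ) * ε + ((2 ^ m : ℕ) : ℝ) ^ 2 * ε ^ 2 := h3
      _ = _ := hfin
  · -- the robust bound
    rintro ε ⟨hε0, hε1⟩
    have hPself : Pm (2 ^ (m + 1)) ∈ perturbs (Pm (2 ^ (m + 1))) ε :=
      ⟨Pm_comp, fun i j h => by simpa using hε0.le⟩
    have hne : ((fun P' => wd P' ((ordTree (m + 1) 0).map (gN m))
        (⟨0, by positivity⟩ : Fin (2 ^ (m + 1)))) '' perturbs (Pm (2 ^ (m + 1))) ε).Nonempty :=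
      ⟨_, ⟨_, hPself, rfl⟩⟩
    have hlb : ∀ y ∈ ((fun P' => wd P' ((ordTree (m + 1) 0).map (gN m))
        (⟨0, by positivity⟩ : Fin (2 ^ (m + 1)))) '' perturbs (Pm (2 ^ (m + 1))) ε),
        (1 - ε) ^ (2 * m + 1) ≤ y := by
      rintro y ⟨P', hP', rfl⟩
      refine sigma'_lower m P' (fun i j h => (hP'.1 i j h).1)
        (fun i j h => (hP'.1 i j h).2.2) (1 - ε) (by linarith) ?_
      intro i j hij h1
      have hd := hP'.2 i j hij
      rw [h1] at hd
      have := abs_le.mp hd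
      linarith [this.1, this.2]
    have hge : (1 - ε) ^ (2 * m + 1)
        ≤ wpe ⟨0, by positivity⟩ (Pm (2 ^ (m + 1))) ε ((ordTree (m + 1) 0).map (gN m)) :=
      le_csInf hne hlb
    have hb := bern_strict hε0 hε1 (2 * m + 1) (by omega)
    have hcast : 1 - (2 * ((m : ℝ) + 1) - 1) * ε = 1 - ((2 * m + 1 : ℕ) : ℝ) * ε := by
      push_cast
      ring
    have : (1 : ℝ) - (2 * (((m : ℕ) + 1 : ℕ) : ℝ) - 1) * ε < (1 - ε) ^ (2 * m + 1) := by
      push_cast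
      push_cast at hb
      linarith
    exact lt_of_lt_of_le this hge
end

section
/- For every integer n ≥ 1, in the hard n-round tournament H_n, player 1 wins the complete tournament (i.e. wp(1,P,σ) = 1) if and only if σ is the draw placing players 1,2,…,2^n on the leaves in this left-to-right order (up to the identification of draws by swapping subtrees at internal nodes). In particular, there is exactly one draw in which player 1 wins H_n. -/
namespace HardCore

/-- `a` beats `b` in the hard tournament (0-indexed players on ℕ). -/
def beats (a b : ℕ) : Prop :=
  (a < b ∧ a + 2 ^ padicValNat 2 b = b) ∨ (b < a ∧ b + 2 ^ padicValNat 2 a ≠ a)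

instance (a b : ℕ) : Decidable (beats a b) := by unfold beats; infer_instance

lemma beats_irrefl (a : ℕ) : ¬ beats a a := by unfold beats; omega

lemma beats_asymm {a b : ℕ} (h : beats a b) : ¬ beats b a := by
  unfold beats at *; omega

lemma beats_total {a b : ℕ} (h : a ≠ b) : beats a b ∨ beats b a := by
  unfold beats; omega

/-- The winner of a tournament tree. -/
def wN : ∀ {n : ℕ}, BT ℕ n → ℕ
  | _, .leaf a => a
  | _, .node L R => if beats (wN L) (wN R) then wN L else wN R

lemma wN_mem : ∀ {n : ℕ} (t : BT ℕ n), wN t ∈ t.leaves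
  | _, .leaf a => by simp [wN, BT.leaves]
  | _, .node L R => by
      simp only [wN, BT.leaves, List.mem_append]
      split
      · exact Or.inl (wN_mem L)
      · exact Or.inr (wN_mem R)

lemma leaves_length : ∀ {n : ℕ} (t : BT ℕ n), t.leaves.length = 2 ^ n
  | _, .leaf a => rfl
  | _, .node L R => by
      simp [BT.leaves, leaves_length L, leaves_length R, pow_succ]; ring

/-- helper: characterization of padicValNat 2 -/
lemma v2_eq {x v : ℕ} (h1 : 2 ^ v ∣ x) (h2 : ¬ 2 ^ (v + 1) ∣ x) :
    padicValNat 2 x = v := by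
  have hx : x ≠ 0 := by rintro rfl; exact h2 (dvd_zero _)
  have hle : v ≤ padicValNat 2 x := (padicValNat_dvd_iff_le hx).mp h1
  have hlt : ¬ (v + 1 ≤ padicValNat 2 x) := fun hc => h2 ((padicValNat_dvd_iff_le hx).mpr hc)
  omega

lemma v2_dvd {x : ℕ} : 2 ^ padicValNat 2 x ∣ x := pow_padicValNat_dvd

lemma v2_succ_not_dvd {x : ℕ} (hx : x ≠ 0) : ¬ 2 ^ (padicValNat 2 x + 1) ∣ x :=
  pow_succ_padicValNat_not_dvd hx

/-- key log comparison: if `x` beats `y` (both nonzero), `log 2 y ≤ log 2 x`. -/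
lemma log_le_of_beats {x y : ℕ} (h : beats x y) (hx : x ≠ 0) (hy : y ≠ 0) :
    Nat.log 2 y ≤ Nat.log 2 x := by
  rcases h with ⟨hlt, heq⟩ | ⟨hlt, _⟩
  · -- x < y, y = x + 2^(v2 y)
    set v := padicValNat 2 y with hv
    have hdy : 2 ^ v ∣ y := v2_dvd
    have hdx : 2 ^ v ∣ x := by
      have : x = y - 2 ^ v := by omega
      rw [this]; exact Nat.dvd_sub hdy dvd_rfl
    have hvx : 2 ^ v ≤ x := Nat.le_of_dvd (Nat.pos_of_ne_zero hx) hdx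
    have hvlog : v ≤ Nat.log 2 x := (Nat.le_log_iff_pow_le one_lt_two hx).mpr hvx
    have hxlt : x < 2 ^ (Nat.log 2 x + 1) := Nat.lt_pow_succ_log_self one_lt_two x
    have hdp : 2 ^ v ∣ 2 ^ (Nat.log 2 x + 1) := pow_dvd_pow 2 (by omega)
    have hd2 : 2 ^ v ∣ 2 ^ (Nat.log 2 x + 1) - x := Nat.dvd_sub hdp hdx
    have hpos : 0 < 2 ^ (Nat.log 2 x + 1) - x := by omega
    have h3 : 2 ^ v ≤ 2 ^ (Nat.log 2 x + 1) - x := Nat.le_of_dvd hpos hd2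
    have hy2 : y ≤ 2 ^ (Nat.log 2 x + 1) := by omega
    have hyne : y ≠ 2 ^ (Nat.log 2 x + 1) := by
      intro he
      have : v = Nat.log 2 x + 1 := by rw [hv, he, padicValNat.prime_pow]
      omega
    exact Nat.lt_succ_iff.mp (Nat.log_lt_of_lt_pow hy (by omega))
  · exact Nat.log_mono_right (le_of_lt hlt)

/-- Lemma L: in a 0-free tree every leaf is `< 2^(log₂(winner)+1)`. -/
lemma levelBound : ∀ {n : ℕ} (t : BT ℕ n), (∀ s ∈ t.leaves, s ≠ 0) →
    ∀ s ∈ t.leaves, s < 2 ^ (Nat.log 2 (wN t) + 1)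
  | _, .leaf a, h0, s, hs => by
      simp [BT.leaves] at hs; subst hs
      exact Nat.lt_pow_succ_log_self one_lt_two s
  | _, .node L R, h0, s, hs => by
      have h0L : ∀ s ∈ L.leaves, s ≠ 0 := fun s hs =>
        h0 s (by simp [BT.leaves, List.mem_append]; exact Or.inl hs)
      have h0R : ∀ s ∈ R.leaves, s ≠ 0 := fun s hs =>
        h0 s (by simp [BT.leaves, List.mem_append]; exact Or.inr hs)
      have ha0 : wN L ≠ 0 := h0L _ (wN_mem L)
      have hb0 : wN R ≠ 0 := h0R _ (wN_mem R)
      have key : Nat.log 2 (wN L) ≤ Nat.log 2 (wN (.node L R)) ∧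
          Nat.log 2 (wN R) ≤ Nat.log 2 (wN (.node L R)) := by
        by_cases hab : wN L = wN R
        · by_cases hb : beats (wN L) (wN R) <;> simp [wN, hb, hab]
        · by_cases hb : beats (wN L) (wN R)
          · have h := log_le_of_beats hb ha0 hb0
            simp only [wN, if_pos hb]; exact ⟨le_refl _, h⟩
          · have hba : beats (wN R) (wN L) := (beats_total hab).resolve_left hb
            have h := log_le_of_beats hba hb0 ha0
            simp only [wN, if_neg hb]; exact ⟨h, le_refl _⟩
      obtain ⟨hL', hR'⟩ := key
      simp only [BT.leaves, List.mem_append] at hs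
      rcases hs with hs | hs
      · exact lt_of_lt_of_le (levelBound L h0L s hs)
          (Nat.pow_le_pow_right (by norm_num) (by omega))
      · exact lt_of_lt_of_le (levelBound R h0R s hs)
          (Nat.pow_le_pow_right (by norm_num) (by omega))

/-- Lemma U: the winner of a 0-free depth-d tree is at least 2^d. -/
lemma lemU {n : ℕ} (t : BT ℕ n) (hnd : t.leaves.Nodup)
    (h0 : ∀ s ∈ t.leaves, s ≠ 0) : 2 ^ n ≤ wN t := by
  have hx : wN t ≠ 0 := h0 _ (wN_mem t)
  set M := Nat.log 2 (wN t) with hM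
  have hsub : t.leaves.toFinset ⊆ Finset.Ico 1 (2 ^ (M + 1)) := by
    intro s hs
    rw [List.mem_toFinset] at hs
    rw [Finset.mem_Ico]
    exact ⟨Nat.one_le_iff_ne_zero.mpr (h0 s hs), levelBound t h0 s hs⟩
  have hcard : t.leaves.toFinset.card = 2 ^ n := by
    rw [List.toFinset_card_of_nodup hnd, leaves_length]
  have h1 : 2 ^ n ≤ 2 ^ (M + 1) - 1 := by
    have := Finset.card_le_card hsub
    rwa [hcard, Nat.card_Ico] at this
  have h2 : n < M + 1 := by
    have hp : (0:ℕ) < 2 ^ (M+1) := Nat.pow_pos (by norm_num)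
    have : 2 ^ n < 2 ^ (M + 1) := by omega
    exact (Nat.pow_lt_pow_iff_right (by norm_num)).mp this
  calc 2 ^ n ≤ 2 ^ M := Nat.pow_le_pow_right (by norm_num) (by omega)
    _ ≤ wN t := Nat.pow_log_le_self 2 hx

lemma beats_zero {b : ℕ} (h : beats 0 b) : b = 2 ^ padicValNat 2 b := by
  rcases h with ⟨_, h⟩ | ⟨h, _⟩
  · omega
  · omega

/-- helper for the node case of L0 (and main), symmetrized. -/
lemma wN_node_zero {n : ℕ} {L R : BT ℕ n} (hnd : (BT.node L R).leaves.Nodup)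
    (hw : wN (.node L R) = 0) :
    (wN L = 0 ∧ beats 0 (wN R)) ∨ (wN R = 0 ∧ beats 0 (wN L)) := by
  have hab : wN L ≠ wN R := by
    intro he
    have h1 : wN L ∈ L.leaves := wN_mem L
    have h2 : wN R ∈ R.leaves := wN_mem R
    simp only [BT.leaves] at hnd
    rw [List.nodup_append] at hnd
    exact hnd.2.2 _ h1 _ h2 he
  by_cases hb : beats (wN L) (wN R)
  · left
    have ha : wN L = 0 := by simpa [wN, if_pos hb] using hw
    exact ⟨ha, ha ▸ hb⟩
  · right
    have hb' : wN R = 0 := by simpa [wN, if_neg hb] using hw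
    have hba : beats (wN R) (wN L) := (beats_total hab).resolve_left hb
    exact ⟨hb', hb' ▸ hba⟩

/-- Lemma L0: if 0 wins a depth-d tree containing no powers 2^v with v ≥ d,
then all leaves are < 2^d. -/
lemma lemL0 : ∀ (n : ℕ) (t : BT ℕ n), t.leaves.Nodup → wN t = 0 →
    (∀ v, n ≤ v → (2 ^ v : ℕ) ∉ t.leaves) → ∀ s ∈ t.leaves, s < 2 ^ n := by
  intro n
  induction n with
  | zero =>
    intro t hnd hw hp s hs
    cases t with | leaf a =>
    simp [BT.leaves] at hs
    simp [wN] at hw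
    omega
  | succ d ih =>
    -- symmetrized inner argument
    have aux : ∀ L R : BT ℕ d, (L.leaves ++ R.leaves).Nodup →
        wN L = 0 → beats 0 (wN R) →
        (∀ v, d + 1 ≤ v → (2 ^ v : ℕ) ∉ L.leaves ++ R.leaves) →
        ∀ s ∈ L.leaves ++ R.leaves, s < 2 ^ (d + 1) := by
      intro L R hnd hL hbR hp s hs
      rw [List.nodup_append] at hnd
      obtain ⟨hndL, hndR, hdisj⟩ := hnd
      have h0mem : (0:ℕ) ∈ L.leaves := hL ▸ wN_mem L
      have h0R : ∀ s ∈ R.leaves, s ≠ 0 := by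
        intro s hs hs0
        exact hdisj _ h0mem _ hs hs0.symm
      have hbig : 2 ^ d ≤ wN R := lemU R hndR h0R
      have hpow : wN R = 2 ^ padicValNat 2 (wN R) := beats_zero hbR
      have hmemR : wN R ∈ R.leaves := wN_mem R
      have hvlt : padicValNat 2 (wN R) < d + 1 := by
        by_contra hc
        have hmm : (2 ^ padicValNat 2 (wN R) : ℕ) ∈ L.leaves ++ R.leaves := by
          rw [← hpow]; exact List.mem_append_right _ hmemR
        exact hp (padicValNat 2 (wN R)) (by omega) hmm
      have hveq : padicValNat 2 (wN R) = d := by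
        have h1 : 2 ^ d ≤ 2 ^ padicValNat 2 (wN R) := by rw [← hpow]; exact hbig
        have := (Nat.pow_le_pow_iff_right (by norm_num : 1 < 2)).mp h1
        omega
      have hwR : wN R = 2 ^ d := by rw [hpow, hveq]
      -- leaves of R are < 2^(d+1)
      have hRbound : ∀ s ∈ R.leaves, s < 2 ^ (d + 1) := by
        intro s hs
        have := levelBound R h0R s hs
        rwa [hwR, Nat.log_pow (by norm_num : 1 < 2)] at this
      -- leaves of L are < 2^d by ih
      have hLbound : ∀ s ∈ L.leaves, s < 2 ^ d := by
        apply ih L hndL hL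
        intro v hv hmem
        rcases Nat.eq_or_lt_of_le hv with he | hlt
        · exact hdisj _ hmem _ (by rw [← he, ← hwR]; exact hmemR) rfl
        · exact hp v (by omega) (List.mem_append_left _ hmem)
      rcases List.mem_append.mp hs with hs | hs
      · have := hLbound s hs
        have : (2:ℕ) ^ d ≤ 2 ^ (d+1) := Nat.pow_le_pow_right (by norm_num) (by omega)
        omega
      · exact hRbound s hs
    intro t hnd hw hp s hs
    cases t with | node L R =>
    simp only [BT.leaves] at hnd hp hs ⊢
    rcases wN_node_zero (by simpa [BT.leaves] using hnd) hw with ⟨hL, hbR⟩ | ⟨hR, hbL⟩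
    · exact aux L R hnd hL hbR hp s hs
    · have hnd' : (R.leaves ++ L.leaves).Nodup := (List.perm_append_comm.nodup_iff).mpr hnd
      have hp' : ∀ v, d + 1 ≤ v → (2 ^ v : ℕ) ∉ R.leaves ++ L.leaves := by
        intro v hv hmem
        exact hp v hv (by rwa [List.mem_append, or_comm, ← List.mem_append] at hmem)
      have := aux R L hnd' hR hbL hp' s
        (by rwa [List.mem_append, or_comm, ← List.mem_append] at hs)
      exact this


lemma v2_shift {k m b : ℕ} (hm : 2 ^ k ∣ m) (hb0 : 0 < b) (hbk : b < 2 ^ k) :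
    padicValNat 2 (m + b) = padicValNat 2 b := by
  have hbne : b ≠ 0 := by omega
  set v := padicValNat 2 b with hv
  have hdb : 2 ^ v ∣ b := v2_dvd
  have hvk : v < k := by
    have h1 : 2 ^ v ≤ b := Nat.le_of_dvd hb0 hdb
    have : (2:ℕ) ^ v < 2 ^ k := by omega
    exact (Nat.pow_lt_pow_iff_right (by norm_num)).mp this
  apply v2_eq
  · exact dvd_add (dvd_trans (pow_dvd_pow 2 (by omega)) hm) hdb
  · intro hc
    have hdm : 2 ^ (v + 1) ∣ m := dvd_trans (pow_dvd_pow 2 (by omega)) hm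
    have : 2 ^ (v + 1) ∣ b := (Nat.dvd_add_right hdm).mp hc
    exact v2_succ_not_dvd hbne this

lemma beats_shift {k m a b : ℕ} (hm : 2 ^ k ∣ m) (ha : a < 2 ^ k) (hb : b < 2 ^ k) :
    beats (m + a) (m + b) ↔ beats a b := by
  rcases Nat.eq_zero_or_pos a with ha0 | ha0 <;> rcases Nat.eq_zero_or_pos b with hb0 | hb0
  · subst ha0; subst hb0; simp [beats_irrefl]
  · subst ha0
    have hv := v2_shift hm hb0 hb
    simp only [beats, hv]
    omega
  · subst hb0
    have hv := v2_shift hm ha0 ha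
    simp only [beats, hv]
    omega
  · have hva := v2_shift hm ha0 ha
    have hvb := v2_shift hm hb0 hb
    simp only [beats, hva, hvb]
    omega

lemma leaves_map {α β : Type} (f : α → β) :
    ∀ {n : ℕ} (t : BT α n), (t.map f).leaves = t.leaves.map f
  | _, .leaf a => rfl
  | _, .node L R => by simp [BT.map, BT.leaves, leaves_map f L, leaves_map f R]

lemma map_map {α β γ : Type} (f : α → β) (g : β → γ) :
    ∀ {n : ℕ} (t : BT α n), (t.map f).map g = t.map (g ∘ f)
  | _, .leaf a => rfl
  | _, .node L R => by simp [BT.map, map_map f g L, map_map f g R]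

lemma map_id_on {α : Type} (f : α → α) :
    ∀ {n : ℕ} (t : BT α n), (∀ a ∈ t.leaves, f a = a) → t.map f = t
  | _, .leaf a, h => by simp [BT.map, h a (by simp [BT.leaves])]
  | _, .node L R, h => by
      simp only [BT.leaves, List.mem_append] at h
      simp [BT.map, map_id_on f L (fun a ha => h a (Or.inl ha)),
        map_id_on f R (fun a ha => h a (Or.inr ha))]

lemma wN_add {k m : ℕ} (hm : 2 ^ k ∣ m) :
    ∀ {n : ℕ} (t : BT ℕ n), (∀ s ∈ t.leaves, s < 2 ^ k) →
      wN (t.map (fun s => m + s)) = m + wN t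
  | _, .leaf a, _ => rfl
  | _, .node L R, h => by
      simp only [BT.leaves, List.mem_append] at h
      have hL := wN_add hm L (fun s hs => h s (Or.inl hs))
      have hR := wN_add hm R (fun s hs => h s (Or.inr hs))
      have hak : wN L < 2 ^ k := h _ (Or.inl (wN_mem L))
      have hbk : wN R < 2 ^ k := h _ (Or.inr (wN_mem R))
      simp only [BT.map, wN, hL, hR, beats_shift hm hak hbk]
      split <;> rfl

lemma ordTree_leaves : ∀ (d s : ℕ), ∀ x ∈ (ordTree d s).leaves, s ≤ x ∧ x < s + 2 ^ d
  | 0, s => by simp [ordTree, BT.leaves]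
  | d + 1, s => by
      intro x hx
      simp only [ordTree, BT.leaves, List.mem_append] at hx
      have h2 : (0:ℕ) < 2 ^ d := Nat.pow_pos (by norm_num)
      rcases hx with hx | hx
      · have := ordTree_leaves d s x hx
        have : (2:ℕ) ^ d ≤ 2 ^ (d+1) := Nat.pow_le_pow_right (by norm_num) (by omega)
        have := ordTree_leaves d s x hx
        rw [pow_succ]; omega
      · have := ordTree_leaves d (s + 2 ^ d) x hx
        rw [pow_succ]; omega

lemma ordTree_map_add : ∀ (d s m : ℕ),
    (ordTree d s).map (fun x => m + x) = ordTree d (m + s)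
  | 0, s, m => rfl
  | d + 1, s, m => by
      simp only [ordTree, BT.map, ordTree_map_add d s m,
        ordTree_map_add d (s + 2 ^ d) m]
      have : m + (s + 2 ^ d) = m + s + 2 ^ d := by ring
      rw [this]

lemma wN_ordTree : ∀ (d s : ℕ), 2 ^ d ∣ s → wN (ordTree d s) = s
  | 0, s, _ => rfl
  | d + 1, s, h => by
      have hd : (2:ℕ) ^ d ∣ s := dvd_trans (pow_dvd_pow 2 (by omega)) h
      have hL := wN_ordTree d s hd
      have hR := wN_ordTree d (s + 2 ^ d) (dvd_add hd dvd_rfl)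
      have hv : padicValNat 2 (s + 2 ^ d) = d := by
        apply v2_eq
        · exact dvd_add hd dvd_rfl
        · intro hc
          have h1 : 2 ^ (d + 1) ∣ s := by rwa [pow_succ]
          have : (2:ℕ) ^ (d+1) ∣ 2 ^ d := (Nat.dvd_add_right h1).mp hc
          have h2 : (2:ℕ) ^ (d+1) ≤ 2 ^ d := Nat.le_of_dvd (Nat.pow_pos (by norm_num)) this
          have h3 : (2:ℕ) ^ d < 2 ^ (d+1) := Nat.pow_lt_pow_right (by norm_num) (by omega)
          omega
      have hb : beats s (s + 2 ^ d) := by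
        left
        constructor
        · have : (0:ℕ) < 2 ^ d := Nat.pow_pos (by norm_num)
          omega
        · rw [hv]
      simp only [ordTree, wN, hL, hR, if_pos hb]


lemma equiv_refl {α : Type} : ∀ {n : ℕ} (t : BT α n), BTequiv t t
  | _, .leaf a => rfl
  | _, .node L R => Or.inl ⟨equiv_refl L, equiv_refl R⟩

lemma ite_beats_comm (x y : ℕ) :
    (if beats x y then x else y) = (if beats y x then y else x) := by
  by_cases hxy : x = y
  · subst hxy; simp
  · by_cases h : beats x y
    · simp [h, beats_asymm h]
    · have h' : beats y x := (beats_total hxy).resolve_left h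
      simp [h, h']

lemma wN_congr : ∀ {n : ℕ} {t t' : BT ℕ n}, BTequiv t t' → wN t = wN t'
  | 0, .leaf a, .leaf b, h => h
  | _ + 1, .node L R, .node L' R', h => by
      rcases h with ⟨h1, h2⟩ | ⟨h1, h2⟩
      · simp only [wN, wN_congr h1, wN_congr h2]
      · simp only [wN, wN_congr h1, wN_congr h2]
        exact ite_beats_comm _ _

lemma equiv_map {α β : Type} (f : α → β) :
    ∀ {n : ℕ} {t t' : BT α n}, BTequiv t t' → BTequiv (t.map f) (t'.map f)
  | 0, .leaf a, .leaf b, h => by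
      simp only [BT.map]
      exact congrArg f h
  | _ + 1, .node L R, .node L' R', h => by
      rcases h with ⟨h1, h2⟩ | ⟨h1, h2⟩
      · exact Or.inl ⟨equiv_map f h1, equiv_map f h2⟩
      · exact Or.inr ⟨equiv_map f h1, equiv_map f h2⟩

lemma equiv_of_map {α β : Type} (f : α → β) (hf : Function.Injective f) :
    ∀ {n : ℕ} {t t' : BT α n}, BTequiv (t.map f) (t'.map f) → BTequiv t t'
  | 0, .leaf a, .leaf b, h => hf h
  | _ + 1, .node L R, .node L' R', h => by
      rcases h with ⟨h1, h2⟩ | ⟨h1, h2⟩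
      · exact Or.inl ⟨equiv_of_map f hf h1, equiv_of_map f hf h2⟩
      · exact Or.inr ⟨equiv_of_map f hf h1, equiv_of_map f hf h2⟩

lemma equiv_swap {α : Type} {n : ℕ} {L R : BT α n} :
    ∀ {u : BT α (n + 1)}, BTequiv (BT.node R L) u → BTequiv (BT.node L R) u
  | .node A B, h => by
      rcases h with ⟨h1, h2⟩ | ⟨h1, h2⟩
      · exact Or.inr ⟨h2, h1⟩
      · exact Or.inl ⟨h2, h1⟩

/-- Main rigidity theorem: if 0 wins a tree with distinct leaves within [0, 2^d),
the tree is equivalent to the ordered one. -/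
theorem mainThm : ∀ (d : ℕ) (t : BT ℕ d), t.leaves.Nodup →
    (∀ s ∈ t.leaves, s < 2 ^ d) → wN t = 0 → BTequiv t (ordTree d 0) := by
  intro d
  induction d with
  | zero =>
    intro t hnd hb hw
    cases t with | leaf a =>
    exact hw
  | succ d ih =>
    have aux : ∀ L R : BT ℕ d, (L.leaves ++ R.leaves).Nodup →
        (∀ s ∈ L.leaves ++ R.leaves, s < 2 ^ (d + 1)) →
        wN L = 0 → beats 0 (wN R) → BTequiv (BT.node L R) (ordTree (d + 1) 0) := by
      intro L R hnd hb hL hbR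
      rw [List.nodup_append] at hnd
      obtain ⟨hndL, hndR, hdisj⟩ := hnd
      have h0mem : (0:ℕ) ∈ L.leaves := hL ▸ wN_mem L
      have h0R : ∀ s ∈ R.leaves, s ≠ 0 := fun s hs hs0 => hdisj _ h0mem _ hs hs0.symm
      have hbig : 2 ^ d ≤ wN R := lemU R hndR h0R
      have hpow : wN R = 2 ^ padicValNat 2 (wN R) := beats_zero hbR
      have hmemR : wN R ∈ R.leaves := wN_mem R
      have hRlt : wN R < 2 ^ (d + 1) := hb _ (List.mem_append_right _ hmemR)
      have hwR : wN R = 2 ^ d := by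
        have h1 : 2 ^ d ≤ 2 ^ padicValNat 2 (wN R) := by rw [← hpow]; exact hbig
        have h2 : 2 ^ padicValNat 2 (wN R) < 2 ^ (d + 1) := by rw [← hpow]; exact hRlt
        have h3 := (Nat.pow_le_pow_iff_right (by norm_num : 1 < 2)).mp h1
        have h4 := (Nat.pow_lt_pow_iff_right (by norm_num : 1 < 2)).mp h2
        have : padicValNat 2 (wN R) = d := by omega
        rw [hpow, this]
      -- leaves of L are < 2^d
      have hLb : ∀ s ∈ L.leaves, s < 2 ^ d := by
        apply lemL0 d L hndL hL
        intro v hv hmem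
        rcases Nat.eq_or_lt_of_le hv with he | hlt
        · exact hdisj _ hmem _ (by rw [← he, ← hwR]; exact hmemR) rfl
        · have h1 : (2:ℕ) ^ v < 2 ^ (d + 1) := hb _ (List.mem_append_left _ hmem)
          have h2 : (2:ℕ) ^ (d+1) ≤ 2 ^ v := Nat.pow_le_pow_right (by norm_num) (by omega)
          omega
      have hequivL : BTequiv L (ordTree d 0) := ih L hndL hLb hL
      -- leaves of L fill [0, 2^d), hence leaves of R avoid it
      have hLfin : L.leaves.toFinset = Finset.range (2 ^ d) := by
        apply Finset.eq_of_subset_of_card_le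
        · intro x hx
          rw [List.mem_toFinset] at hx
          rw [Finset.mem_range]
          exact hLb x hx
        · rw [Finset.card_range, List.toFinset_card_of_nodup hndL, leaves_length]
      have hRlow : ∀ s ∈ R.leaves, 2 ^ d ≤ s := by
        intro s hs
        by_contra hc
        have : s ∈ L.leaves := by
          rw [← List.mem_toFinset, hLfin, Finset.mem_range]; omega
        exact hdisj _ this _ hs rfl
      -- shift R down
      set R' := R.map (fun s => s - 2 ^ d) with hR'
      have hleavesR' : R'.leaves = R.leaves.map (fun s => s - 2 ^ d) := leaves_map _ R
      have hback : R'.map (fun s => 2 ^ d + s) = R := by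
        rw [hR', map_map]
        apply map_id_on
        intro a ha
        have := hRlow a ha
        simp only [Function.comp]
        omega
      have hndR' : R'.leaves.Nodup := by
        rw [hleavesR']
        apply List.Nodup.map_on _ hndR
        intro x hx y hy hxy
        have := hRlow x hx
        have := hRlow y hy
        omega
      have hbR' : ∀ s ∈ R'.leaves, s < 2 ^ d := by
        intro s hs
        rw [hleavesR', List.mem_map] at hs
        obtain ⟨x, hx, rfl⟩ := hs
        have h1 := hb x (List.mem_append_right _ hx)
        have h2 := hRlow x hx
        rw [pow_succ] at h1
        omega
      have hwR' : wN R' = 0 := by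
        have := wN_add (dvd_refl (2 ^ d)) R' hbR'
        rw [hback] at this
        omega
      have hequivR' : BTequiv R' (ordTree d 0) := ih R' hndR' hbR' hwR'
      have hequivR : BTequiv R (ordTree d (2 ^ d)) := by
        have := equiv_map (fun s => 2 ^ d + s) hequivR'
        rw [hback, ordTree_map_add] at this
        simpa using this
      show BTequiv (BT.node L R) (BT.node (ordTree d 0) (ordTree d (0 + 2 ^ d)))
      rw [Nat.zero_add]
      exact Or.inl ⟨hequivL, hequivR⟩
    intro t hnd hb hw
    cases t with | node L R =>
    simp only [BT.leaves] at hnd hb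
    rcases wN_node_zero (by simpa [BT.leaves] using hnd) hw with ⟨hL, hbR⟩ | ⟨hR, hbL⟩
    · exact aux L R hnd hb hL hbR
    · apply equiv_swap
      apply aux R L ((List.perm_append_comm.nodup_iff).mpr hnd) _ hR hbL
      intro s hs
      exact hb s (by rwa [List.mem_append, or_comm, ← List.mem_append] at hs)

end HardCore

namespace HardCore

lemma hardP_eq {n : ℕ} (i j : Fin (2 ^ n)) (h : i ≠ j) :
    hardP n i j = if beats (i : ℕ) (j : ℕ) then 1 else 0 := by
  have hv : (i : ℕ) ≠ (j : ℕ) := fun hc => h (Fin.ext hc)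
  unfold hardP
  rw [if_neg h]
  rcases Nat.lt_trichotomy (i : ℕ) (j : ℕ) with hlt | heq | hgt
  · rw [if_pos hlt]
    by_cases he : (i : ℕ) + 2 ^ padicValNat 2 (j : ℕ) = (j : ℕ)
    · rw [if_pos he, if_pos (show beats (i : ℕ) (j : ℕ) from Or.inl ⟨hlt, he⟩)]
    · rw [if_neg he, if_neg]
      rintro (⟨_, h2⟩ | ⟨h2, _⟩)
      · exact he h2
      · omega
  · exact absurd heq hv
  · rw [if_neg (by omega)]
    by_cases he : (j : ℕ) + 2 ^ padicValNat 2 (i : ℕ) = (i : ℕ)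
    · rw [if_pos he, if_neg]
      rintro (⟨h2, _⟩ | ⟨_, h2⟩)
      · omega
      · exact h2 he
    · rw [if_neg he, if_pos (show beats (i : ℕ) (j : ℕ) from Or.inr ⟨hgt, he⟩)]

lemma ind_sum {N : ℕ} (f : Fin N → ℝ) (c : Fin N) :
    (∑ j : Fin N, (if (j : ℕ) = (c : ℕ) then (1 : ℝ) else 0) * f j) = f c := by
  rw [Finset.sum_eq_single c]
  · simp
  · intro j _ hj
    rw [if_neg (fun hc => hj (Fin.ext hc)), zero_mul]
  · intro h; exact absurd (Finset.mem_univ c) h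

lemma wd_eq {n : ℕ} : ∀ {k : ℕ} (t : BT (Fin (2 ^ n)) k),
    ((t.map Fin.val).leaves).Nodup →
    ∀ i, wd (hardP n) t i = if (i : ℕ) = wN (t.map Fin.val) then (1 : ℝ) else 0
  | _, .leaf j, _, i => by
      simp only [wd, BT.map, wN]
      by_cases h : i = j
      · subst h; simp
      · rw [if_neg h, if_neg (fun hc => h (Fin.ext hc))]
  | _, .node L R, hnd, i => by
      simp only [BT.map, BT.leaves] at hnd
      rw [List.nodup_append] at hnd
      obtain ⟨hndL, hndR, hdisj⟩ := hnd
      have hamem : wN (L.map Fin.val) ∈ (L.map Fin.val).leaves := wN_mem _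
      have hbmem : wN (R.map Fin.val) ∈ (R.map Fin.val).leaves := wN_mem _
      obtain ⟨ahat, hahat⟩ : ∃ x : Fin (2 ^ n), (x : ℕ) = wN (L.map Fin.val) := by
        rw [leaves_map, List.mem_map] at hamem
        obtain ⟨x, _, hx⟩ := hamem
        exact ⟨x, hx⟩
      obtain ⟨bhat, hbhat⟩ : ∃ x : Fin (2 ^ n), (x : ℕ) = wN (R.map Fin.val) := by
        rw [leaves_map, List.mem_map] at hbmem
        obtain ⟨x, _, hx⟩ := hbmem
        exact ⟨x, hx⟩
      have hab : wN (L.map Fin.val) ≠ wN (R.map Fin.val) :=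
        hdisj _ hamem _ hbmem
      have habhat : ahat ≠ bhat := fun hc => hab (by rw [← hahat, ← hbhat, hc])
      have IHL := wd_eq L hndL
      have IHR := wd_eq R hndR
      simp only [wd, IHL, IHR]
      have hwn : wN ((BT.node L R).map Fin.val) =
          if beats (wN (L.map Fin.val)) (wN (R.map Fin.val)) then wN (L.map Fin.val)
          else wN (R.map Fin.val) := rfl
      rw [hwn, ← hahat, ← hbhat]
      rw [ind_sum (fun j => hardP n i j) bhat, ind_sum (fun j => hardP n i j) ahat]
      have habn : (ahat : ℕ) ≠ (bhat : ℕ) := fun hc => habhat (Fin.ext hc)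
      by_cases hia : (i : ℕ) = (ahat : ℕ)
      · have hib : (i : ℕ) ≠ (bhat : ℕ) := by
          rw [hia, hahat, hbhat]; exact hab
        have hieq : i = ahat := Fin.ext hia
        have hPib : hardP n i bhat = (if beats (ahat : ℕ) (bhat : ℕ) then (1:ℝ) else 0) := by
          rw [hieq, hardP_eq ahat bhat habhat]
        rw [if_pos hia, if_neg hib, one_mul, zero_mul, add_zero, hPib]
        by_cases hba : beats (ahat : ℕ) (bhat : ℕ)
        · simp [hba, hia]
        · simp [hba, hia, hib, habn]
      · by_cases hib : (i : ℕ) = (bhat : ℕ)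
        · have hieq : i = bhat := Fin.ext hib
          have hPia : hardP n i ahat = (if beats (bhat : ℕ) (ahat : ℕ) then (1:ℝ) else 0) := by
            rw [hieq, hardP_eq bhat ahat (Ne.symm habhat)]
          rw [if_neg hia, if_pos hib, zero_mul, one_mul, zero_add, hPia]
          by_cases hba : beats (ahat : ℕ) (bhat : ℕ)
          · simp [hba, beats_asymm hba, hia]
          · have hba' : beats (bhat : ℕ) (ahat : ℕ) := (beats_total habn).resolve_left hba
            simp [hba, hba', hib]
        · rw [if_neg hia, if_neg hib, zero_mul, zero_mul, add_zero]
          by_cases hba : beats (ahat : ℕ) (bhat : ℕ) <;> simp [hba, hia, hib]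

end HardCore

open HardCore (wN) in
/-- in the hard `n`-round tournament, player 1 (index 0) surely wins
iff the draw is (up to swapping subtrees at internal nodes) the identity draw
placing players `0, 1, …, 2^n - 1` in left-to-right order. -/
theorem hard_tournament_unique_winning_draw (n : ℕ) (hn : 1 ≤ n)
    (σ : BT (Fin (2 ^ n)) n) (hσ : IsDraw σ) :
    wd (hardP n) σ ⟨0, by positivity⟩ = 1 ↔ BTequiv σ (idDraw n) := by
  classical
  set T := σ.map Fin.val with hT
  have hndσ : σ.leaves.Nodup := by
    rw [List.nodup_iff_count_le_one]
    intro a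
    exact le_of_eq (hσ a)
  have hndT : T.leaves.Nodup := by
    rw [hT, HardCore.leaves_map]
    exact hndσ.map (Fin.val_injective)
  have hbT : ∀ s ∈ T.leaves, s < 2 ^ n := by
    intro s hs
    rw [hT, HardCore.leaves_map, List.mem_map] at hs
    obtain ⟨x, _, rfl⟩ := hs
    exact x.isLt
  have hid : (idDraw n).map Fin.val = ordTree n 0 := by
    unfold idDraw
    rw [HardCore.map_map]
    apply HardCore.map_id_on
    intro a ha
    have hlt := HardCore.ordTree_leaves n 0 a ha
    simp only [Function.comp]
    exact Nat.mod_eq_of_lt (by omega)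
  have hbridge := HardCore.wd_eq σ hndT ⟨0, by positivity⟩
  have hzero : ((⟨0, by positivity⟩ : Fin (2 ^ n)) : ℕ) = 0 := rfl
  rw [hzero] at hbridge
  constructor
  · intro h
    rw [h] at hbridge
    have hwT : wN T = 0 := by
      by_contra hc
      rw [if_neg (fun he => hc he.symm)] at hbridge
      exact one_ne_zero hbridge
    have hequiv : BTequiv T (ordTree n 0) := HardCore.mainThm n T hndT hbT hwT
    rw [← hid] at hequiv
    exact HardCore.equiv_of_map Fin.val Fin.val_injective hequiv
  · intro h
    have hequiv : BTequiv T ((idDraw n).map Fin.val) := HardCore.equiv_map Fin.val h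
    rw [hid] at hequiv
    have hwT : wN T = 0 := by
      rw [HardCore.wN_congr hequiv, HardCore.wN_ordTree n 0 (dvd_zero _)]
    rw [hbridge, hwT, if_pos rfl]
end

section
/- Define polynomials p_k ∈ ℝ[ε] by p_1(ε) = 1 − ε and p_{k+1}(ε) = p_k(ε)·( p_k(ε)·(1−ε) + (1 − p_k(ε))·ε ). Then for every n ≥ 1: the degree of p_n equals 2^n − 1, p_n(0) = 1, and the coefficient of the linear term of p_n equals −(2^n − 1); equivalently, p_n(ε) = 1 − (2^n − 1)ε + ε²·Q(ε) for some polynomial Q. -/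
open Polynomial in
/-- the polynomials `p_1 = 1 - ε`,
`p_{k+1} = p_k (p_k (1-ε) + (1-p_k) ε)` satisfy, for all `n ≥ 1`:
`deg p_n = 2^n - 1`, `p_n(0) = 1`, and the linear coefficient is `-(2^n - 1)`. -/
theorem hard_recurrence_coeffs (p : ℕ → Polynomial ℝ)
    (h1 : p 1 = 1 - Polynomial.X)
    (hrec : ∀ k, 1 ≤ k → p (k + 1) =
      p k * (p k * (1 - Polynomial.X) + (1 - p k) * Polynomial.X))
    (n : ℕ) (hn : 1 ≤ n) :
    (p n).natDegree = 2 ^ n - 1 ∧ (p n).coeff 0 = 1 ∧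
      (p n).coeff 1 = -((2 : ℝ) ^ n - 1) := by
  suffices h : (p n).natDegree = 2 ^ n - 1 ∧ (p n).leadingCoeff < 0 ∧
      (p n).coeff 0 = 1 ∧ (p n).coeff 1 = -((2 : ℝ) ^ n - 1) by
    exact ⟨h.1, h.2.2.1, h.2.2.2⟩
  induction n, hn using Nat.le_induction with
  | base =>
    have hd : (p 1).natDegree = 1 := by
      rw [h1]
      compute_degree!
    refine ⟨hd, ?_, ?_, ?_⟩
    · rw [Polynomial.leadingCoeff, hd, h1]
      norm_num [Polynomial.coeff_one]
    · rw [h1]; simp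
    · rw [h1]
      norm_num [Polynomial.coeff_one]
  | succ k hk ih =>
    obtain ⟨hd, hlc, hc0, hc1⟩ := ih
    set q := p k with hq
    have hC2 : (2 : ℝ[X]) = Polynomial.C 2 := (map_ofNat Polynomial.C 2).symm
    have hdk : 1 ≤ 2 ^ k - 1 := by
      have : 2 ≤ 2 ^ k := by
        calc 2 = 2 ^ 1 := rfl
        _ ≤ 2 ^ k := Nat.pow_le_pow_right (by norm_num) hk
      omega
    have hd1 : 1 ≤ q.natDegree := hd ▸ hdk
    have hq0 : q ≠ 0 := fun h => by simp [h] at hc0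
    have hid : p (k + 1) = q * q + q * (1 - 2 * q) * X := by
      rw [hrec k hk]; ring
    have h2q : (1 - 2 * q).natDegree = q.natDegree := by
      rw [show (1 : ℝ[X]) - 2 * q = -(2 * q - Polynomial.C 1) by
          rw [Polynomial.C_1]; ring,
        natDegree_neg, natDegree_sub_C, hC2, natDegree_C_mul (by norm_num)]
    have h2qlc : (1 - 2 * q).leadingCoeff = -2 * q.leadingCoeff := by
      rw [Polynomial.leadingCoeff, h2q, Polynomial.coeff_sub, hC2,
        Polynomial.coeff_C_mul, Polynomial.coeff_one, if_neg (by omega),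
        Polynomial.leadingCoeff]
      ring
    have h2q0 : (1 - 2 * q) ≠ 0 := by
      intro h
      have h0 : (1 - 2 * q).coeff 0 = 0 := by rw [h]; simp
      rw [Polynomial.coeff_sub, hC2, Polynomial.coeff_C_mul, hc0,
        Polynomial.coeff_one] at h0
      norm_num at h0
    have hBd : (q * (1 - 2 * q) * X).natDegree = 2 * q.natDegree + 1 := by
      rw [natDegree_mul (mul_ne_zero hq0 h2q0) X_ne_zero,
        natDegree_mul hq0 h2q0, h2q, natDegree_X]
      ring
    have hBlc : (q * (1 - 2 * q) * X).leadingCoeff = -2 * q.leadingCoeff ^ 2 := by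
      rw [leadingCoeff_mul, leadingCoeff_mul, h2qlc, leadingCoeff_X]
      ring
    have hAd : (q * q).natDegree = 2 * q.natDegree := by
      rw [natDegree_mul hq0 hq0]; ring
    have hlt : (q * q).natDegree < (q * (1 - 2 * q) * X).natDegree := by
      rw [hAd, hBd]; omega
    have hDeg : (p (k + 1)).natDegree = 2 * q.natDegree + 1 := by
      rw [hid, natDegree_add_eq_right_of_natDegree_lt hlt, hBd]
    have hLC : (p (k + 1)).leadingCoeff < 0 := by
      have : (p (k + 1)).leadingCoeff = (q * (1 - 2 * q) * X).leadingCoeff := by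
        rw [Polynomial.leadingCoeff, hDeg, hid, Polynomial.coeff_add,
          coeff_eq_zero_of_natDegree_lt (hAd ▸ (by omega : (q*q).natDegree < 2 * q.natDegree + 1)),
          zero_add, ← hBd]
        rfl
      rw [this, hBlc]
      nlinarith [sq_nonneg q.leadingCoeff, hlc]
    have hB0 : (q * (1 - 2 * q) * X).coeff 0 = 0 := by
      simp [Polynomial.coeff_mul_X_zero]
    have hC0 : (p (k + 1)).coeff 0 = 1 := by
      rw [hid, Polynomial.coeff_add, hB0, add_zero, Polynomial.mul_coeff_zero, hc0]
      ring
    have hA1 : (q * q).coeff 1 = 2 * (q.coeff 0 * q.coeff 1) := by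
      rw [Polynomial.coeff_mul]
      rw [show Finset.HasAntidiagonal.antidiagonal 1 = {(0, 1), (1, 0)} from rfl]
      simp
      ring
    have hB1 : (q * (1 - 2 * q) * X).coeff 1 = q.coeff 0 * (1 - 2 * q).coeff 0 := by
      rw [Polynomial.coeff_mul_X (n := 0), Polynomial.mul_coeff_zero]
    have hC1 : (p (k + 1)).coeff 1 = -((2 : ℝ) ^ (k + 1) - 1) := by
      rw [hid, Polynomial.coeff_add, hA1, hB1, hc0, hc1]
      simp [Polynomial.coeff_sub, Polynomial.coeff_one, hc0]
      ring
    refine ⟨?_, hLC, hC0, hC1⟩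
    rw [hDeg, hd]
    have h2 : 2 ≤ 2 ^ k := by
      calc 2 = 2 ^ 1 := rfl
      _ ≤ 2 ^ k := Nat.pow_le_pow_right (by norm_num) hk
    have : 2 ^ (k + 1) = 2 * 2 ^ k := by ring
    omega
end
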